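/- arXiv:1610.04137 — 4 statements merged into one kernel-verified Lean document; each statement's English description precedes it below -/
import Mathlib

section
/- Let Q be a finite acyclic quiver and R a quasi-Frobenius ring. A representation M ∈ Rep(Q,R) is an injective object of the category Rep(Q,R) if and only if M is RI-fibrant and M_j is an injective R-module for every vertex j ∈ Q_0. -/
open CategoryTheory CategoryTheory.Limits

/-- An `R`-linear map factors through a projective `R`-module. -/
def FactorsThroughProjective (R : Type) [Ring R] {M N : Type} [AddCommGroup M] [Module R M]
    [AddCommGroup N] [Module R N] (f : M →ₗ[R] N) : Prop :=
  ∃ (P : Type) (_ : AddCommGroup P) (_ : Module R P) (_ : Module.Projective R P)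
    (a : M →ₗ[R] P) (b : P →ₗ[R] N), b ∘ₗ a = f

/-- An `R`-linear map is a stable equivalence if it becomes an isomorphism in the stable
module category: there is `g` in the other direction such that `g ∘ f - id` and `f ∘ g - id`
each factor through a projective module. -/
def IsStableEquiv (R : Type) [Ring R] {M N : Type} [AddCommGroup M] [Module R M]
    [AddCommGroup N] [Module R N] (f : M →ₗ[R] N) : Prop :=
  ∃ g : N →ₗ[R] M,
    FactorsThroughProjective R (g ∘ₗ f - LinearMap.id) ∧
    FactorsThroughProjective R (f ∘ₗ g - LinearMap.id)

/-- A quasi-Frobenius ring: left and right Noetherian, and injective over itself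
as a left and as a right module. -/
class IsQuasiFrobenius (R : Type) [Ring R] : Prop where
  noetherian_left : IsNoetherianRing R
  noetherian_right : IsNoetherianRing Rᵐᵒᵖ
  selfInjective_left : Module.Injective R R
  selfInjective_right : Module.Injective Rᵐᵒᵖ Rᵐᵒᵖ

/-- The category of representations of a quiver `V` over a ring `R`:
functors from the free path category on `V` to `R`-modules. -/
abbrev QuivRep (R : Type) [Ring R] (V : Type) [Quiver.{1} V] : Type _ :=
  Paths V ⥤ ModuleCat.{0} R

namespace QuivRep

variable {R : Type} [Ring R] {V : Type} [Quiver.{1} V]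

/-- The `R`-module of a representation at a vertex `j`. -/
abbrev vtx (M : QuivRep R V) (j : V) : ModuleCat R := M.obj ((Paths.of V).obj j)

/-- The structure map of a representation along an arrow `a : i ⟶ j`. -/
abbrev arrowMap (M : QuivRep R V) {i j : V} (a : i ⟶ j) : M.vtx i ⟶ M.vtx j :=
  M.map ((Paths.of V).map a)

/-- The component at a vertex `j` of a morphism of representations. -/
abbrev app {M N : QuivRep R V} (f : M ⟶ N) (j : V) : ↥(M.vtx j) →ₗ[R] ↥(N.vtx j) := (f.app ((Paths.of V).obj j)).hom

/-- A representation is monic if, at each vertex `j`, the natural map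
`⊕_{a : i ⟶ j} M_i → M_j`, `(x_a) ↦ Σ_a m_a (x_a)`, is injective. -/
def IsMonic (M : QuivRep R V) : Prop :=
  ∀ j : V,
    letI : DecidableEq (Σ i : V, i ⟶ j) := Classical.decEq _
    Function.Injective
      (DirectSum.toModule R (Σ i : V, i ⟶ j) (M.vtx j)
        (fun a => ((M.arrowMap a.2).hom : ↥(M.vtx a.1) →ₗ[R] ↥(M.vtx j))))

/-- A representation is RI-fibrant if, at each vertex `j`, the natural map
`M_j → ∏_{a : j ⟶ i} M_i`, `x ↦ (m_a x)_a`, is surjective. -/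
def IsRIFibrant (M : QuivRep R V) : Prop :=
  ∀ j : V,
    Function.Surjective
      (LinearMap.pi
        (fun a : Σ i : V, (j ⟶ i) => ((M.arrowMap a.2).hom : ↥(M.vtx j) →ₗ[R] ↥(M.vtx a.1))))

end QuivRep

/-- A quiver is finite and acyclic: finitely many vertices and arrows, and the only
paths from a vertex to itself are trivial. -/
def IsFiniteAcyclic (V : Type) [Quiver.{1} V] : Prop :=
  Nonempty (Fintype V) ∧ (∀ i j : V, Nonempty (Fintype (i ⟶ j))) ∧
    ∀ (i : V) (p : Quiver.Path i i), p.length = 0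

section AlgCore
open MulOpposite Function

variable {R : Type} [Ring R]

/-- Factor a linear map through the range of another when kernels are nested. -/
noncomputable def factorThruRange {M N P : Type} [AddCommGroup M] [Module R M]
    [AddCommGroup N] [Module R N] [AddCommGroup P] [Module R P]
    (τ : M →ₗ[R] N) (σ : M →ₗ[R] P) (h : LinearMap.ker τ ≤ LinearMap.ker σ) :
    (LinearMap.range τ) →ₗ[R] P :=
  (Submodule.liftQ (LinearMap.ker τ) σ h) ∘ₗ (τ.quotKerEquivRange.symm :
    LinearMap.range τ →ₗ[R] (M ⧸ LinearMap.ker τ))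

theorem factorThruRange_apply {M N P : Type} [AddCommGroup M] [Module R M]
    [AddCommGroup N] [Module R N] [AddCommGroup P] [Module R P]
    (τ : M →ₗ[R] N) (σ : M →ₗ[R] P) (h : LinearMap.ker τ ≤ LinearMap.ker σ) (x : M) :
    factorThruRange τ σ h ⟨τ x, LinearMap.mem_range_self τ x⟩ = σ x := by
  simp only [factorThruRange, LinearMap.coe_comp, Function.comp_apply, LinearEquiv.coe_coe]
  rw [LinearMap.quotKerEquivRange_symm_apply_image τ x (LinearMap.mem_range_self τ x)]
  simp

/-- Any right-module map from a right ideal into `R` is left multiplication by some `c`. -/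
theorem rightExt [hR : Module.Injective Rᵐᵒᵖ Rᵐᵒᵖ] (A : Submodule Rᵐᵒᵖ Rᵐᵒᵖ)
    (g : A →ₗ[Rᵐᵒᵖ] Rᵐᵒᵖ) :
    ∃ c : R, ∀ (a : Rᵐᵒᵖ) (h : a ∈ A), unop (g ⟨a, h⟩) = c * unop a := by
  obtain ⟨h, hext⟩ := hR.out A.subtype Subtype.val_injective g
  refine ⟨unop (h 1), fun a ha => ?_⟩
  have : h a = a * h 1 := by
    conv_lhs => rw [show a = a • (1 : Rᵐᵒᵖ) by simp]
    rw [map_smul]; rfl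
  have h2 := hext ⟨a, ha⟩
  simp only [Submodule.subtype_apply] at h2
  rw [this] at h2
  rw [← h2, unop_mul]

/-- The right annihilator of a left ideal, as a left ideal of `Rᵐᵒᵖ` (i.e. right ideal of `R`). -/
def rAnn (I : Ideal R) : Submodule Rᵐᵒᵖ Rᵐᵒᵖ where
  carrier := {z | ∀ i ∈ I, i * unop z = 0}
  add_mem' := fun {z w} hz hw i hi => by simp [unop_add, mul_add, hz i hi, hw i hi]
  zero_mem' := fun i _ => by simp
  smul_mem' := fun s z hz i hi => by
    have : unop (s • z) = unop z * unop s := rfl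
    show i * unop (s • z) = 0
    rw [this, ← mul_assoc, hz i hi, zero_mul]

theorem mem_rAnn {I : Ideal R} {z : Rᵐᵒᵖ} : z ∈ rAnn I ↔ ∀ i ∈ I, i * unop z = 0 := Iff.rfl

/-- The left annihilator of a right ideal. -/
def lAnn (A : Submodule Rᵐᵒᵖ Rᵐᵒᵖ) : Ideal R where
  carrier := {x | ∀ a ∈ A, x * unop a = 0}
  add_mem' := fun {x y} hx hy a ha => by simp [add_mul, hx a ha, hy a ha]
  zero_mem' := fun a _ => by simp
  smul_mem' := fun r x hx a ha => by
    have : r • x = r * x := rfl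
    show r • x * unop a = 0
    rw [this, mul_assoc, hx a ha, mul_zero]

theorem mem_lAnn {A : Submodule Rᵐᵒᵖ Rᵐᵒᵖ} {x : R} : x ∈ lAnn A ↔ ∀ a ∈ A, x * unop a = 0 :=
  Iff.rfl

theorem lr_principal [Module.Injective Rᵐᵒᵖ Rᵐᵒᵖ] (a x : R)
    (hx : ∀ z : R, a * z = 0 → x * z = 0) : ∃ c, x = c * a := by
  set τa := LinearMap.toSpanSingleton Rᵐᵒᵖ Rᵐᵒᵖ (op a) with hτa
  set τx := LinearMap.toSpanSingleton Rᵐᵒᵖ Rᵐᵒᵖ (op x) with hτx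
  have hker : LinearMap.ker τa ≤ LinearMap.ker τx := by
    intro z hz
    simp only [LinearMap.mem_ker, hτa, hτx, LinearMap.toSpanSingleton_apply] at *
    have h1 : a * unop z = 0 := by
      have : unop (z • op a) = a * unop z := rfl
      rw [← this, hz, MulOpposite.unop_zero]
    have h2 := hx _ h1
    have : z • op x = op (x * unop z) := rfl
    rw [this, h2, MulOpposite.op_zero]
  obtain ⟨c, hc⟩ := rightExt (LinearMap.range τa) (factorThruRange τa τx hker)
  have key := hc (τa 1) (LinearMap.mem_range_self τa 1)
  rw [factorThruRange_apply τa τx hker 1] at key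
  refine ⟨c, ?_⟩
  have e1 : unop (τx 1) = x := by simp [hτx, LinearMap.toSpanSingleton_apply]
  have e2 : unop (τa 1) = a := by simp [hτa, LinearMap.toSpanSingleton_apply]
  rw [e1, e2] at key
  exact key

theorem lr_sup [Module.Injective Rᵐᵒᵖ Rᵐᵒᵖ] (A B : Submodule Rᵐᵒᵖ Rᵐᵒᵖ) (x : R)
    (hx : ∀ z ∈ A ⊓ B, x * unop z = 0) :
    ∃ c, (∀ a ∈ A, (x - c) * unop a = 0) ∧ (∀ b ∈ B, c * unop b = 0) := by
  set τx := LinearMap.toSpanSingleton Rᵐᵒᵖ Rᵐᵒᵖ (op x) with hτx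
  set π : (A × B) →ₗ[Rᵐᵒᵖ] Rᵐᵒᵖ :=
    A.subtype ∘ₗ LinearMap.fst Rᵐᵒᵖ A B + B.subtype ∘ₗ LinearMap.snd Rᵐᵒᵖ A B with hπ
  set σ : (A × B) →ₗ[Rᵐᵒᵖ] Rᵐᵒᵖ := τx ∘ₗ A.subtype ∘ₗ LinearMap.fst Rᵐᵒᵖ A B with hσ
  have hker : LinearMap.ker π ≤ LinearMap.ker σ := by
    rintro ⟨⟨a, ha⟩, ⟨b, hb⟩⟩ h
    simp only [LinearMap.mem_ker, hπ, LinearMap.add_apply, LinearMap.coe_comp,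
      Function.comp_apply, LinearMap.fst_apply, LinearMap.snd_apply,
      Submodule.subtype_apply] at h
    have hab : a ∈ A ⊓ B := by
      refine ⟨ha, ?_⟩
      have : a = -b := by linear_combination (norm := abel) h
      rw [this]; exact B.neg_mem hb
    have h0 : x * unop a = 0 := hx a hab
    simp only [LinearMap.mem_ker, hσ, LinearMap.coe_comp, Function.comp_apply,
      LinearMap.fst_apply, Submodule.subtype_apply, hτx, LinearMap.toSpanSingleton_apply]
    have : a • op x = op (x * unop a) := rfl
    rw [this, h0, MulOpposite.op_zero]
  obtain ⟨c, hc⟩ := rightExt (LinearMap.range π) (factorThruRange π σ hker)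
  refine ⟨c, fun a ha => ?_, fun b hb => ?_⟩
  · have key := hc (π (⟨a, ha⟩, 0)) (LinearMap.mem_range_self π _)
    rw [factorThruRange_apply π σ hker _] at key
    have e1 : σ (⟨a, ha⟩, 0) = op (x * unop a) := rfl
    have e2 : π (⟨a, ha⟩, 0) = a := by
      simp [hπ]
    rw [e1, e2, unop_op] at key
    rw [sub_mul, key, sub_self]
  · have key := hc (π (0, ⟨b, hb⟩)) (LinearMap.mem_range_self π _)
    rw [factorThruRange_apply π σ hker _] at key
    have e1 : σ (0, ⟨b, hb⟩) = 0 := by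
      simp [hσ]
    have e2 : π (0, ⟨b, hb⟩) = b := by
      simp [hπ]
    rw [e1, e2] at key
    simp only [MulOpposite.unop_zero] at key
    exact key.symm

theorem rAnn_sup (L₁ L₂ : Ideal R) : rAnn (L₁ ⊔ L₂) = rAnn L₁ ⊓ rAnn L₂ := by
  ext z
  constructor
  · intro hz
    exact ⟨fun i hi => hz i (Ideal.mem_sup_left hi), fun i hi => hz i (Ideal.mem_sup_right hi)⟩
  · rintro ⟨h1, h2⟩ i hi
    obtain ⟨i₁, hi₁, i₂, hi₂, rfl⟩ := Submodule.mem_sup.mp hi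
    rw [add_mul, h1 i₁ hi₁, h2 i₂ hi₂, add_zero]

theorem lr_span_finset [Module.Injective Rᵐᵒᵖ Rᵐᵒᵖ] (s : Finset R) :
    lAnn (rAnn (Ideal.span (s : Set R))) ≤ Ideal.span (s : Set R) := by
  classical
  induction s using Finset.induction_on with
  | empty =>
    intro x hx
    have h1 : (op (1:R)) ∈ rAnn (Ideal.span ((∅ : Finset R) : Set R)) := by
      intro i hi
      simp only [Finset.coe_empty, Ideal.span_empty, Submodule.mem_bot] at hi
      rw [hi, zero_mul]
    have := hx _ h1
    rw [unop_op, mul_one] at this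
    rw [this]
    exact Ideal.zero_mem _
  | @insert a s ha ih =>
    intro x hx
    rw [Finset.coe_insert, Ideal.span_insert] at *
    obtain ⟨c, hc1, hc2⟩ := lr_sup (rAnn (Ideal.span {a})) (rAnn (Ideal.span (s : Set R))) x
      (by intro z hz; exact hx z (by rw [rAnn_sup]; exact hz))
    have hxc : x - c ∈ Ideal.span ({a} : Set R) := by
      obtain ⟨c', hc'⟩ := lr_principal a (x - c) (fun z hz => by
        refine hc1 (op z) ?_
        intro i hi
        obtain ⟨t, ht⟩ := Ideal.mem_span_singleton'.mp hi
        rw [← ht, unop_op, mul_assoc, hz, mul_zero])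
      rw [hc']
      exact Ideal.mem_span_singleton'.mpr ⟨c', rfl⟩
    have hcs : c ∈ Ideal.span (s : Set R) := ih (fun z hz => hc2 z hz)
    have : x = (x - c) + c := by abel
    rw [this]
    exact Submodule.add_mem _ (Ideal.mem_sup_left hxc) (Ideal.mem_sup_right hcs)

/-- The Kasch property of quasi-Frobenius rings: proper left ideals have
nonzero right annihilator. -/
theorem kasch [Module.Injective Rᵐᵒᵖ Rᵐᵒᵖ] [IsNoetherianRing R] (J : Ideal R) (hJ : J ≠ ⊤) :
    ∃ c : R, c ≠ 0 ∧ ∀ j ∈ J, j * c = 0 := by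
  obtain ⟨s, hs⟩ := (IsNoetherian.noetherian J : J.FG)
  by_contra hcon
  push_neg at hcon
  have hbot : rAnn J = ⊥ := by
    rw [Submodule.eq_bot_iff]
    intro z hz
    by_contra hz0
    have := hcon (unop z) (fun h => hz0 (by rw [← op_unop z, h, MulOpposite.op_zero]))
    obtain ⟨j, hj, hj0⟩ := this
    exact hj0 (hz j hj)
  have htop : lAnn (rAnn J) = ⊤ := by
    rw [hbot]
    rw [eq_top_iff]
    intro x _
    intro a ha
    rw [Submodule.mem_bot] at ha
    rw [ha, MulOpposite.unop_zero, mul_zero]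
  have := lr_span_finset (R := R) s
  have hs' : Ideal.span (s : Set R) = J := hs
  rw [hs', htop] at this
  exact hJ (top_le_iff.mp (le_trans le_top this))

/-- Over a quasi-Frobenius ring, every cyclic module embeds into a finite free module. -/
theorem cyclic_embeds_free [Module.Injective Rᵐᵒᵖ Rᵐᵒᵖ] [Module.Injective R R]
    [IsNoetherianRing R] [IsNoetherianRing Rᵐᵒᵖ] (I : Ideal R) :
    ∃ (κ : Type) (_ : Fintype κ) (χ : (R ⧸ I) →ₗ[R] (κ → R)), Function.Injective χ := by
  classical
  obtain ⟨s, hs⟩ := (IsNoetherian.noetherian (rAnn I) : (rAnn I).FG)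
  have hsub : (s : Set Rᵐᵒᵖ) ⊆ rAnn I := hs ▸ Submodule.subset_span
  set κ := {z : Rᵐᵒᵖ // z ∈ s} with hκ
  set χ₀ : R →ₗ[R] (κ → R) :=
    LinearMap.pi (fun k => LinearMap.toSpanSingleton R R (unop k.1)) with hχ₀
  have hkill : I ≤ LinearMap.ker χ₀ := by
    intro i hi
    rw [LinearMap.mem_ker]
    funext k
    exact (mem_rAnn.mp (hsub k.2)) i hi
  refine ⟨κ, inferInstance, Submodule.liftQ I χ₀ hkill, ?_⟩
  rw [← LinearMap.ker_eq_bot, Submodule.eq_bot_iff]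
  intro w hw
  induction w using Submodule.Quotient.induction_on with
  | H r =>
  rw [LinearMap.mem_ker, Submodule.liftQ_apply] at hw
  have hrk : ∀ k : κ, r * unop k.1 = 0 := fun k => congrFun hw k
  rw [Submodule.Quotient.mk_eq_zero]
  by_contra hr
  -- separation via Kasch
  set τ₁ := LinearMap.toSpanSingleton R (R ⧸ I) (Submodule.Quotient.mk r) with hτ₁
  have hJ : LinearMap.ker τ₁ ≠ ⊤ := by
    intro h
    have : (1:R) ∈ LinearMap.ker τ₁ := h ▸ trivial
    rw [LinearMap.mem_ker, hτ₁, LinearMap.toSpanSingleton_apply, one_smul,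
      Submodule.Quotient.mk_eq_zero] at this
    exact hr this
  obtain ⟨c₀, hc₀, hJc₀⟩ := kasch (LinearMap.ker τ₁) hJ
  set τ₂ := LinearMap.toSpanSingleton R R c₀ with hτ₂
  have hker : LinearMap.ker τ₁ ≤ LinearMap.ker τ₂ := by
    intro t ht
    rw [LinearMap.mem_ker, hτ₂, LinearMap.toSpanSingleton_apply, smul_eq_mul]
    exact hJc₀ t ht
  obtain ⟨h, hh⟩ := ‹Module.Injective R R›.out (LinearMap.range τ₁).subtype
    Subtype.val_injective (factorThruRange τ₁ τ₂ hker)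
  -- d := h (mk 1)
  set d := h (Submodule.Quotient.mk 1) with hd
  have hmk : ∀ t : R, h (Submodule.Quotient.mk t) = t * d := by
    intro t
    have : (Submodule.Quotient.mk t : R ⧸ I) = t • Submodule.Quotient.mk 1 := by
      rw [← Submodule.Quotient.mk_smul, smul_eq_mul, mul_one]
    rw [this, map_smul, smul_eq_mul, hd]
  have hId : ∀ i ∈ I, i * d = 0 := by
    intro i hi
    rw [← hmk i]
    have : (Submodule.Quotient.mk i : R ⧸ I) = 0 := (Submodule.Quotient.mk_eq_zero I).mpr hi
    rw [this, map_zero]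
  have hdA : op d ∈ rAnn I := fun i hi => by rw [unop_op]; exact hId i hi
  rw [← hs] at hdA
  obtain ⟨f, -, hf⟩ := Submodule.mem_span_finset.1 hdA
  -- c₀ = h (mk r) = r * d = Σ (r * unop z) * unop (f z) = 0
  have hc : h (Submodule.Quotient.mk r) = c₀ := by
    have h1 := hh ⟨τ₁ 1, LinearMap.mem_range_self τ₁ 1⟩
    rw [factorThruRange_apply τ₁ τ₂ hker 1] at h1
    have e1 : τ₁ 1 = Submodule.Quotient.mk r := by
      rw [hτ₁, LinearMap.toSpanSingleton_apply, one_smul]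
    have e2 : τ₂ 1 = c₀ := by rw [hτ₂, LinearMap.toSpanSingleton_apply, one_smul]
    rw [← e1, ← e2]
    exact h1
  have hrd : r * d = 0 := by
    have : d = ∑ z ∈ s, unop z * unop (f z) := by
      rw [← unop_op d, ← hf]
      rw [Finset.unop_sum]
      apply Finset.sum_congr rfl
      intro z _
      rfl
    rw [this, Finset.mul_sum]
    apply Finset.sum_eq_zero
    intro z hz
    rw [← mul_assoc, hrk ⟨z, hz⟩, zero_mul]
  rw [hmk r, hrd] at hc
  exact hc₀ hc.symm

section LemB
variable {E : Type} {P : Type*} [AddCommGroup E] [Module R E] [AddCommGroup P] [Module R P]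

/-- Over a quasi-Frobenius ring, the kernel of a surjection between injective modules
is injective. -/
theorem ker_injective [Module.Injective Rᵐᵒᵖ Rᵐᵒᵖ] [Module.Injective R R]
    [IsNoetherianRing R] [IsNoetherianRing Rᵐᵒᵖ]
    (hE : Module.Injective R E) (hP : Module.Injective R P)
    (Φ : E →ₗ[R] P) (hΦ : Function.Surjective Φ) :
    Module.Injective R (LinearMap.ker Φ) := by
  classical
  apply Module.Baer.injective
  intro I φ
  obtain ⟨φt, hφt⟩ := hE.out I.subtype Subtype.val_injective ((LinearMap.ker Φ).subtype ∘ₗ φ)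
  set u := Φ (φt 1) with hu
  have hIu : ∀ i ∈ I, i • u = 0 := by
    intro i hi
    rw [hu, ← map_smul, ← map_smul]
    have : i • (1:R) = (I.subtype ⟨i, hi⟩ : R) := by simp
    rw [this, hφt ⟨i, hi⟩]
    simp only [LinearMap.coe_comp, Function.comp_apply, Submodule.subtype_apply]
    exact (φ ⟨i, hi⟩).2
  have hkills : I ≤ LinearMap.ker (LinearMap.toSpanSingleton R P u) := by
    intro i hi
    rw [LinearMap.mem_ker, LinearMap.toSpanSingleton_apply]
    exact hIu i hi
  set β : (R ⧸ I) →ₗ[R] P := Submodule.liftQ I (LinearMap.toSpanSingleton R P u) hkills with hβ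
  obtain ⟨κ, hfin, χ, hχ⟩ := cyclic_embeds_free (R := R) I
  haveI := hP
  obtain ⟨βb, hβb'⟩ := Module.Injective.extension_property R P _ _ χ hχ β
  have hβb : ∀ x, βb (χ x) = β x := fun x => LinearMap.congr_fun hβb' x
  set b := Pi.basisFun R κ with hb
  set L : (κ → R) →ₗ[R] E := b.constr ℕ (fun k => Function.surjInv hΦ (βb (b k))) with hL
  have hΦL : Φ ∘ₗ L = βb := by
    apply b.ext
    intro k
    simp only [LinearMap.coe_comp, Function.comp_apply, hL, Module.Basis.constr_basis]
    exact Function.surjInv_eq hΦ _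
  set e := L (χ (Submodule.Quotient.mk 1)) with he
  have hΦe : Φ e = u := by
    rw [he, ← LinearMap.comp_apply, hΦL, hβb, hβ, Submodule.liftQ_apply,
      LinearMap.toSpanSingleton_apply, one_smul]
  have hIe : ∀ i ∈ I, i • e = 0 := by
    intro i hi
    rw [he, ← map_smul, ← map_smul]
    have : i • (Submodule.Quotient.mk 1 : R ⧸ I) = 0 := by
      rw [← Submodule.Quotient.mk_smul, smul_eq_mul, mul_one, Submodule.Quotient.mk_eq_zero]
      exact hi
    rw [this, map_zero, map_zero]
  set ext : R →ₗ[R] E := φt - LinearMap.toSpanSingleton R E e with hext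
  have hrange : ∀ r : R, ext r ∈ LinearMap.ker Φ := by
    intro r
    rw [LinearMap.mem_ker, hext]
    simp only [LinearMap.sub_apply, map_sub, LinearMap.toSpanSingleton_apply]
    have : φt r = r • φt 1 := by rw [← map_smul, smul_eq_mul, mul_one]
    rw [this, map_smul, map_smul, ← hu, hΦe, sub_self]
  refine ⟨LinearMap.codRestrict (LinearMap.ker Φ) ext hrange, fun x hx => ?_⟩
  apply Subtype.val_injective
  simp only [LinearMap.codRestrict_apply, hext, LinearMap.sub_apply,
    LinearMap.toSpanSingleton_apply]
  have h1 : φt x = ((LinearMap.ker Φ).subtype ∘ₗ φ) ⟨x, hx⟩ := by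
    rw [← hφt ⟨x, hx⟩]; simp
  have h2 : x • e = 0 := hIe x hx
  rw [h1, h2, sub_zero]
  rfl

/-- A linear section of a surjection with injective kernel. -/
theorem exists_section (Φ : E →ₗ[R] P) (hΦ : Function.Surjective Φ)
    (hK : Module.Injective R (LinearMap.ker Φ)) :
    ∃ s : P →ₗ[R] E, Φ ∘ₗ s = LinearMap.id := by
  obtain ⟨ρ, hρ⟩ := hK.out (LinearMap.ker Φ).subtype Subtype.val_injective LinearMap.id
  set D : E →ₗ[R] E := LinearMap.id - (LinearMap.ker Φ).subtype ∘ₗ ρ with hD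
  have hDk : ∀ x ∈ LinearMap.ker Φ, D x = 0 := by
    intro x hx
    simp only [hD, LinearMap.sub_apply, LinearMap.id_apply, LinearMap.coe_comp,
      Function.comp_apply, Submodule.subtype_apply]
    have := hρ ⟨x, hx⟩
    simp only [Submodule.subtype_apply] at this
    rw [this, LinearMap.id_apply, sub_self]
  have hΦD : ∀ x : E, Φ (D x) = Φ x := by
    intro x
    simp only [hD, LinearMap.sub_apply, LinearMap.id_apply, LinearMap.coe_comp,
      Function.comp_apply, Submodule.subtype_apply, map_sub]
    rw [(ρ x).2, sub_zero]
  have key : ∀ (p : P) (x y : E), Φ x = p → Φ y = p → D x = D y := by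
    intro p x y hx hy
    have : x - y ∈ LinearMap.ker Φ := by rw [LinearMap.mem_ker, map_sub, hx, hy, sub_self]
    have h0 := hDk _ this
    rw [map_sub, sub_eq_zero] at h0
    exact h0
  refine ⟨{ toFun := fun p => D (Function.surjInv hΦ p)
            map_add' := ?_
            map_smul' := ?_ }, ?_⟩
  · intro p q
    rw [← map_add D]
    exact key (p + q) _ _ (Function.surjInv_eq hΦ _)
      (by rw [map_add, Function.surjInv_eq hΦ, Function.surjInv_eq hΦ])
  · intro r p
    simp only [RingHom.id_apply]
    rw [← map_smul D]
    exact key (r • p) _ _ (Function.surjInv_eq hΦ _)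
      (by rw [map_smul, Function.surjInv_eq hΦ])
  · ext p
    simp only [LinearMap.coe_comp, Function.comp_apply, LinearMap.coe_mk, AddHom.coe_mk,
      LinearMap.id_apply]
    rw [hΦD, Function.surjInv_eq hΦ]

/-- The key extension lemma used at each vertex. -/
theorem vertex_extension [Module.Injective Rᵐᵒᵖ Rᵐᵒᵖ] [Module.Injective R R]
    [IsNoetherianRing R] [IsNoetherianRing Rᵐᵒᵖ]
    {X Y : Type} [AddCommGroup X] [Module R X] [AddCommGroup Y] [Module R Y]
    (hE : Module.Injective R E) (hP : Module.Injective R P)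
    (Φ : E →ₗ[R] P) (hΦ : Function.Surjective Φ)
    (g : X →ₗ[R] Y) (hg : Function.Injective g) (f : X →ₗ[R] E) (ψ : Y →ₗ[R] P)
    (hc : Φ ∘ₗ f = ψ ∘ₗ g) :
    ∃ h : Y →ₗ[R] E, h ∘ₗ g = f ∧ Φ ∘ₗ h = ψ := by
  have hK := ker_injective hE hP Φ hΦ
  obtain ⟨s, hs⟩ := exists_section Φ hΦ hK
  have hk0 : ∀ x : X, (f - s ∘ₗ ψ ∘ₗ g) x ∈ LinearMap.ker Φ := by
    intro x
    rw [LinearMap.mem_ker]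
    simp only [LinearMap.sub_apply, LinearMap.coe_comp, Function.comp_apply, map_sub]
    have h1 : Φ (f x) = ψ (g x) := congrFun (congrArg DFunLike.coe hc) x
    have h2 : Φ (s (ψ (g x))) = ψ (g x) := congrFun (congrArg DFunLike.coe hs) (ψ (g x))
    rw [h1, h2, sub_self]
  obtain ⟨k, hk⟩ := hK.out g hg (LinearMap.codRestrict (LinearMap.ker Φ) _ hk0)
  refine ⟨s ∘ₗ ψ + (LinearMap.ker Φ).subtype ∘ₗ k, ?_, ?_⟩
  · ext x
    simp only [LinearMap.add_apply, LinearMap.coe_comp, Function.comp_apply,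
      Submodule.subtype_apply]
    rw [hk x]
    simp only [LinearMap.codRestrict_apply, LinearMap.sub_apply, LinearMap.coe_comp,
      Function.comp_apply]
    abel
  · ext y
    simp only [LinearMap.add_apply, LinearMap.coe_comp, Function.comp_apply,
      Submodule.subtype_apply, map_add]
    have h2 : Φ (s (ψ y)) = ψ y := congrFun (congrArg DFunLike.coe hs) (ψ y)
    rw [h2, (k y).2, add_zero]

end LemB

end AlgCore

section QuiverTools
variable {V : Type} [Quiver.{1} V]

/-- Split off the first arrow of a path. -/
def firstSplit {k : V} : ∀ {j : V}, Quiver.Path k j → Option (Σ i : V, (k ⟶ i) × Quiver.Path i j)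
  | _, Quiver.Path.nil => none
  | _, Quiver.Path.cons Quiver.Path.nil e => some ⟨_, e, Quiver.Path.nil⟩
  | _, Quiver.Path.cons (Quiver.Path.cons p e') e =>
    (firstSplit (Quiver.Path.cons p e')).map (fun x => ⟨x.1, x.2.1, x.2.2.cons e⟩)

theorem firstSplit_cons {k x j : V} (q : Quiver.Path k x) (y) (h : firstSplit q = some y)
    (e : x ⟶ j) : firstSplit (q.cons e) = some ⟨y.1, y.2.1, y.2.2.cons e⟩ := by
  cases q with
  | nil => simp [firstSplit] at h
  | cons p e' =>
    show (firstSplit ((p.cons e'))).map _ = _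
    rw [h]
    rfl

theorem firstSplit_toPath_comp {k i : V} (a : k ⟶ i) :
    ∀ {j : V} (p : Quiver.Path i j), firstSplit (a.toPath.comp p) = some ⟨i, a, p⟩ := by
  intro j p
  induction p with
  | nil => rfl
  | cons p e ih =>
    rw [Quiver.Path.comp_cons]
    exact firstSplit_cons _ _ ih e

/-- The successor relation of a quiver. -/
def QSucc (i j : V) : Prop := Nonempty (j ⟶ i)

theorem qsucc_wf (hV : IsFiniteAcyclic V) : WellFounded (QSucc (V := V)) := by
  classical
  obtain ⟨⟨hfin⟩, _, hacyc⟩ := hV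
  set m : V → ℕ := fun j =>
    (Finset.univ.filter (fun x => ∃ p : Quiver.Path j x, 0 < p.length)).card with hm
  have hlt : ∀ i j : V, QSucc i j → m i < m j := by
    rintro i j ⟨a⟩
    apply Finset.card_lt_card
    constructor
    · intro x hx
      rw [Finset.mem_filter] at hx ⊢
      obtain ⟨-, p, hp⟩ := hx
      exact ⟨Finset.mem_univ x, a.toPath.comp p, by
        rw [Quiver.Path.length_comp]; omega⟩
    · intro hsub
      have hi : i ∈ Finset.univ.filter (fun x => ∃ p : Quiver.Path j x, 0 < p.length) := by
        rw [Finset.mem_filter]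
        exact ⟨Finset.mem_univ i, a.toPath, by simp [Quiver.Hom.toPath]⟩
      have := hsub hi
      rw [Finset.mem_filter] at this
      obtain ⟨-, p, hp⟩ := this
      have := hacyc i p
      omega
  exact Subrelation.wf (fun {i j} h => hlt i j h) (measure m).wf

end QuiverTools

section RepTools
variable {R : Type} [Ring R] {V : Type} [Quiver.{1} V]

/-- Build a morphism of quiver representations from vertexwise components commuting
with the arrow maps. -/
def mkNat {M N : QuivRep R V} (η : ∀ j : V, (↥(M.vtx j) →ₗ[R] ↥(N.vtx j)))
    (hη : ∀ {i j : V} (a : i ⟶ j) (x : ↥(M.vtx i)),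
      η j (M.arrowMap a x) = N.arrowMap a (η i x)) : M ⟶ N where
  app X := ModuleCat.ofHom (η X)
  naturality {X Y} p := by
    induction p using Paths.induction_fixed_source with
    | id =>
      rw [M.map_id, N.map_id, Category.id_comp, Category.comp_id]
    | @comp u v p q ih =>
      have sq : M.map ((Paths.of V).map q) ≫ ModuleCat.ofHom (η ((Paths.of V).obj v))
          = ModuleCat.ofHom (η ((Paths.of V).obj u)) ≫ N.map ((Paths.of V).map q) :=
        ModuleCat.hom_ext (LinearMap.ext (fun x => hη q x))
      simp only [Functor.map_comp, Category.assoc]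
      exact (congrArg (M.map p ≫ ·) sq).trans (((Category.assoc _ _ _).symm.trans
        (congrArg (· ≫ N.map ((Paths.of V).map q)) ih)).trans (Category.assoc _ _ _))

def pathList {a : V} : ∀ {b : V}, Quiver.Path a b → List (Σ x : V, Σ y : V, x ⟶ y)
  | _, Quiver.Path.nil => []
  | _, Quiver.Path.cons p e => ⟨_, _, e⟩ :: pathList p

theorem pathList_inj {a : V} : ∀ {b b' : V} (p : Quiver.Path a b) (q : Quiver.Path a b'),
    pathList p = pathList q → b = b' ∧ HEq p q
  | _, _, .nil, .nil, _ => ⟨rfl, HEq.rfl⟩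
  | _, _, .nil, .cons _ _, h => by simp [pathList] at h
  | _, _, .cons _ _, .nil, h => by simp [pathList] at h
  | _, _, .cons p e, .cons q e', h => by
    injection h with hh ht
    obtain ⟨rfl, hpq⟩ := pathList_inj p q ht
    cases hpq
    cases hh
    exact ⟨rfl, HEq.rfl⟩

theorem paths_small (hV : IsFiniteAcyclic V) (X : Paths V) (j : V) :
    Small.{0} (X ⟶ (Paths.of V).obj j) := by
  haveI : ∀ x y : V, Small.{0} (x ⟶ y) := fun x y => by
    letI := (hV.2.1 x y).some
    exact small_of_injective (Fintype.equivFin (x ⟶ y)).injective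
  have h : Small.{0} (@Quiver.Path V _ X j) :=
    small_of_injective (β := List (Σ x : V, Σ y : V, x ⟶ y))
      (f := fun p : @Quiver.Path V _ X j => @pathList V _ X j p)
      (fun p q h => eq_of_heq (pathList_inj p q h).2)
  exact h
end RepTools

theorem Module.Injective.pi' {R : Type} [Ring R] {ι : Type} {M : ι → Type}
    [∀ i, AddCommGroup (M i)] [∀ i, Module R (M i)] (h : ∀ i, Module.Injective R (M i)) :
    Module.Injective R (∀ i, M i) where
  out X Y _ _ _ _ f hf g := by
    choose e he using fun i => (h i).out f hf ((LinearMap.proj i) ∘ₗ g)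
    exact ⟨LinearMap.pi e, fun x => by ext i; exact he i x⟩

theorem Module.Injective.of_retract {R A B : Type} [Ring R] [AddCommGroup A] [Module R A]
    [AddCommGroup B] [Module R B] (s : A →ₗ[R] B) (r : B →ₗ[R] A) (hr : ∀ a, r (s a) = a)
    (hB : Module.Injective R B) : Module.Injective R A where
  out X Y _ _ _ _ f hf g := by
    obtain ⟨h, hh⟩ := hB.out f hf (s ∘ₗ g)
    exact ⟨r ∘ₗ h, fun x => by
      simp only [LinearMap.coe_comp, Function.comp_apply, hh x]; exact hr (g x)⟩

section Coind
variable {R : Type} [Ring R] {V : Type} [Quiver.{1} V]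

/-- The coinduced ("cofree") representation on a family of modules. -/
noncomputable def coind [∀ (X : Paths V) (j : V), Small.{0} (X ⟶ (Paths.of V).obj j)]
    (I : V → ModuleCat.{0} R) : QuivRep R V where
  obj X := ModuleCat.of R (∀ j : V, Shrink.{0} (X ⟶ (Paths.of V).obj j) → ↥(I j))
  map {X Y} p := ModuleCat.ofHom (LinearMap.pi (fun j => LinearMap.pi
    (fun q : Shrink.{0} (Y ⟶ (Paths.of V).obj j) =>
      LinearMap.proj (equivShrink _ (p ≫ (equivShrink _).symm q)) ∘ₗ LinearMap.proj j)))
  map_id X := by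
    ext f
    rename_i j q
    show f j (equivShrink _ (𝟙 X ≫ (equivShrink _).symm q)) = f j q
    rw [Category.id_comp, Equiv.apply_symm_apply]
  map_comp {X Y Z} p q := by
    ext f
    rename_i j w
    show f j (equivShrink _ ((p ≫ q) ≫ (equivShrink _).symm w))
      = f j (equivShrink _ (p ≫ (equivShrink _).symm (equivShrink _ (q ≫ (equivShrink _).symm w))))
    rw [Category.assoc, Equiv.symm_apply_apply]

theorem coind_map_apply [∀ (X : Paths V) (j : V), Small.{0} (X ⟶ (Paths.of V).obj j)]
    (I : V → ModuleCat.{0} R) {X Y : Paths V} (p : X ⟶ Y)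
    (f : ↥((coind I).obj X)) (j : V) (q : Shrink.{0} (Y ⟶ (Paths.of V).obj j)) :
    ((coind I).map p f) j q = f j (equivShrink _ (p ≫ (equivShrink _).symm q)) := rfl

theorem coind_injective [∀ (X : Paths V) (j : V), Small.{0} (X ⟶ (Paths.of V).obj j)] (I : V → ModuleCat.{0} R)
    (hI : ∀ j, Module.Injective R ↥(I j)) (k : V) :
    Module.Injective R ↥((coind I).vtx k) :=
  Module.Injective.pi' (fun j => Module.Injective.pi' (fun _ => hI j))

theorem coind_fibrant [∀ (X : Paths V) (j : V), Small.{0} (X ⟶ (Paths.of V).obj j)] (I : V → ModuleCat.{0} R) : (coind I).IsRIFibrant := by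
  classical
  intro k
  intro G
  refine ⟨fun j q => ?_, ?_⟩
  · exact match @firstSplit V _ k j ((equivShrink ((Paths.of V).obj k ⟶ (Paths.of V).obj j)).symm q) with
    | none => 0
    | some x => G ⟨x.1, x.2.1⟩ j (equivShrink _ x.2.2)
  · funext a
    show (coind I).map ((Paths.of V).map a.2) _ = G a
    funext j q
    have e2 : @firstSplit V _ k j ((equivShrink ((Paths.of V).obj k ⟶ (Paths.of V).obj j)).symm
        (equivShrink _ ((Paths.of V).map a.2 ≫
          (equivShrink ((Paths.of V).obj a.1 ⟶ (Paths.of V).obj j)).symm q)))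
          = some ⟨a.1, a.2, (equivShrink ((Paths.of V).obj a.1 ⟶ (Paths.of V).obj j)).symm q⟩ :=
      (congrArg (@firstSplit V _ k j) (Equiv.symm_apply_apply _ _)).trans
        (firstSplit_toPath_comp a.2 _)
    exact (congrArg (fun o : Option (Σ i : V, (k ⟶ i) × Quiver.Path i j) => match o with
      | none => (0 : ↥(I j))
      | some x => G ⟨x.1, x.2.1⟩ j (equivShrink ((Paths.of V).obj x.1 ⟶ (Paths.of V).obj j) x.2.2))
      e2).trans (congrArg (G a j) (Equiv.apply_symm_apply _ q))

end Coind

section Forward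
variable {R : Type} [Ring R] {V : Type} [Quiver.{1} V]

theorem forward_direction [hsm : ∀ (X : Paths V) (j : V), Small.{0} (X ⟶ (Paths.of V).obj j)] (M : QuivRep R V) (hM : Injective M) :
    M.IsRIFibrant ∧ ∀ j : V, Module.Injective R ↥(M.vtx j) := by
  classical
  set I : V → ModuleCat.{0} R := fun j => Injective.under (M.vtx j) with hI
  have hIinj : ∀ j, Module.Injective R ↥(I j) := fun j =>
    Module.injective_module_of_injective_object (inj := inferInstanceAs (Injective (I j)))
  set ι : ∀ j : V, (↥(M.vtx j) →ₗ[R] ↥(I j)) := fun j => (Injective.ι (M.vtx j)).hom with hι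
  have hιinj : ∀ j, Function.Injective (ι j) := fun j =>
    (ModuleCat.mono_iff_injective (Injective.ι (M.vtx j))).mp inferInstance
  set η : M ⟶ coind I := mkNat
    (fun k => LinearMap.pi (fun j => LinearMap.pi
      (fun q : Shrink.{0} ((Paths.of V).obj k ⟶ (Paths.of V).obj j) =>
        ι j ∘ₗ (M.map ((equivShrink _).symm q)).hom)))
    (by
      intro i j a x
      funext j' q
      show ι j' (M.map ((equivShrink _).symm q) (M.map ((Paths.of V).map a) x))
        = ι j' (M.map ((equivShrink _).symm
          (equivShrink _ ((Paths.of V).map a ≫ (equivShrink _).symm q))) x)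
      rw [Equiv.symm_apply_apply, M.map_comp]
      rfl) with hη
  have happ : ∀ (k : Paths V) (x : ↥(M.obj k)) (j : V) (q : Shrink.{0} (k ⟶ (Paths.of V).obj j)),
      (η.app k x) j q = ι j (M.map ((equivShrink _).symm q) x) := fun k x j q => rfl
  haveI : ∀ X : Paths V, Mono (η.app X) := by
    intro X
    rw [ModuleCat.mono_iff_injective]
    intro x y hxy
    have hxy' : (η.app X x : ∀ j : V, Shrink.{0} (X ⟶ (Paths.of V).obj j) → ↥(I j))
        = (η.app X y : ∀ j : V, Shrink.{0} (X ⟶ (Paths.of V).obj j) → ↥(I j)) := hxy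
    have : ι X (M.map (𝟙 X) x) = ι X (M.map (𝟙 X) y) := by
      have h0 : ι X (M.map ((@equivShrink _ (hsm X X)).symm (@equivShrink _ (hsm X X) (𝟙 X))) x)
          = ι X (M.map ((@equivShrink _ (hsm X X)).symm (@equivShrink _ (hsm X X) (𝟙 X))) y) :=
        congrFun (congrFun hxy' X) (@equivShrink _ (hsm X X) (𝟙 X))
      have e : (@equivShrink _ (hsm X X)).symm (@equivShrink _ (hsm X X) (𝟙 X)) = 𝟙 X :=
        Equiv.symm_apply_apply _ _
      exact (congrArg (fun z : X ⟶ (Paths.of V).obj X => ι X (M.map z x)) e).symm.trans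
        (h0.trans (congrArg (fun z : X ⟶ (Paths.of V).obj X => ι X (M.map z y)) e))
    apply hιinj X
    rw [show M.map (𝟙 X) x = x by rw [M.map_id]; rfl] at this
    rw [show M.map (𝟙 X) y = y by rw [M.map_id]; rfl] at this
    exact this
  haveI : Mono η := NatTrans.mono_of_mono_app η
  set r : coind I ⟶ M := Injective.factorThru (𝟙 M) η with hr
  have hretr : ∀ (k : Paths V) (x : ↥(M.obj k)), r.app k (η.app k x) = x := by
    intro k x
    have h1 : η ≫ r = 𝟙 M := Injective.comp_factorThru (𝟙 M) η
    have := congrArg (fun z => NatTrans.app z k) h1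
    exact congrFun (congrArg (fun (z : M.obj k ⟶ M.obj k) => (z : ↥(M.obj k) → ↥(M.obj k))) this) x
  constructor
  · -- RI-fibrant
    intro k w
    obtain ⟨u, hu⟩ := coind_fibrant I k (fun a => η.app ((Paths.of V).obj a.1) (w a))
    refine ⟨r.app ((Paths.of V).obj k) u, ?_⟩
    funext a
    have hnat := r.naturality ((Paths.of V).map a.2)
    have hnat' : ∀ z, r.app ((Paths.of V).obj a.1) ((coind I).map ((Paths.of V).map a.2) z)
        = M.map ((Paths.of V).map a.2) (r.app ((Paths.of V).obj k) z) := by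
      intro z
      exact congrFun (congrArg (fun (w : (coind I).obj _ ⟶ M.obj _) =>
        (w : ↥((coind I).obj _) → ↥(M.obj _))) hnat) z
    have hua : (coind I).map ((Paths.of V).map a.2) u = η.app ((Paths.of V).obj a.1) (w a) :=
      congrFun hu a
    show M.arrowMap a.2 (r.app ((Paths.of V).obj k) u) = w a
    rw [← hnat', hua, hretr]
  · -- pointwise injective
    intro j
    exact Module.Injective.of_retract (η.app ((Paths.of V).obj j)).hom (r.app ((Paths.of V).obj j)).hom
      (hretr ((Paths.of V).obj j)) (coind_injective I hIinj j)

end Forward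

section Backward
variable {R : Type} [Ring R] {V : Type} [Quiver.{1} V]

theorem backward_direction [IsQuasiFrobenius R] (hV : IsFiniteAcyclic V) (M : QuivRep R V)
    (hfib : M.IsRIFibrant) (hinj : ∀ j : V, Module.Injective R ↥(M.vtx j)) :
    Injective M := by
  classical
  haveI : IsNoetherianRing R := IsQuasiFrobenius.noetherian_left
  haveI : IsNoetherianRing Rᵐᵒᵖ := IsQuasiFrobenius.noetherian_right
  haveI : Module.Injective R R := IsQuasiFrobenius.selfInjective_left
  haveI : Module.Injective Rᵐᵒᵖ Rᵐᵒᵖ := IsQuasiFrobenius.selfInjective_right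
  constructor
  intro X Y f g hg
  have hgmono : ∀ k : V, Function.Injective (QuivRep.app g k) := by
    intro k
    have : Mono (g.app ((Paths.of V).obj k)) := (NatTrans.mono_iff_mono_app g).mp hg _
    exact (ModuleCat.mono_iff_injective _).mp this
  have wf := qsucc_wf hV
  have MP : ∀ j : V, Module.Injective R (∀ a : Σ i : V, (j ⟶ i), ↥(M.vtx a.1)) :=
    fun j => @Module.Injective.pi R _ _ (fun a : Σ i : V, (j ⟶ i) => ↥(M.vtx a.1)) _ _ _
      (fun a => hinj a.1)
  set Φ : ∀ j : V, (↥(M.vtx j) →ₗ[R] (∀ a : Σ i : V, (j ⟶ i), ↥(M.vtx a.1))) :=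
    fun j => LinearMap.pi
      (fun a : Σ i : V, (j ⟶ i) => (M.arrowMap a.2).hom) with hΦ
  set body : ∀ j : V, (∀ i : V, QSucc i j → (↥(Y.vtx i) →ₗ[R] ↥(M.vtx i))) →
      (↥(Y.vtx j) →ₗ[R] ↥(M.vtx j)) := fun j ih =>
    if hcond : (Φ j) ∘ₗ (QuivRep.app f j) =
        (LinearMap.pi (fun a : Σ i : V, (j ⟶ i) =>
          (ih a.1 ⟨a.2⟩) ∘ₗ (Y.arrowMap a.2).hom)) ∘ₗ
          (QuivRep.app g j) then
      (vertex_extension (hinj j) (MP j) (Φ j) (hfib j) (QuivRep.app g j) (hgmono j)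
        (QuivRep.app f j) _ hcond).choose
    else 0
  set H : ∀ j : V, (↥(Y.vtx j) →ₗ[R] ↥(M.vtx j)) := fun j => WellFounded.fix wf body j with hH
  have hfix : ∀ j, H j = body j (fun i _ => H i) := fun j => WellFounded.fix_eq wf body j
  have key : ∀ j : V, (H j) ∘ₗ (QuivRep.app g j) = QuivRep.app f j ∧
      ∀ (i : V) (a : j ⟶ i),
        (M.arrowMap a).hom ∘ₗ H j
          = H i ∘ₗ (Y.arrowMap a).hom := by
    intro j
    induction j using WellFounded.induction wf with
    | _ j IH =>
    have hcond : (Φ j) ∘ₗ (QuivRep.app f j) =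
        (LinearMap.pi (fun a : Σ i : V, (j ⟶ i) =>
          (H a.1) ∘ₗ (Y.arrowMap a.2).hom)) ∘ₗ
          (QuivRep.app g j) := by
      apply LinearMap.ext
      intro x
      funext a
      have hf := f.naturality ((Paths.of V).map a.2)
      have hfx : M.arrowMap a.2 (QuivRep.app f j x) = QuivRep.app f a.1 (X.arrowMap a.2 x) :=
        (congrFun (congrArg (fun (w : X.vtx j ⟶ M.vtx a.1) =>
          (w : ↥(X.vtx j) → ↥(M.vtx a.1))) hf) x).symm
      have hgn := g.naturality ((Paths.of V).map a.2)
      have hgx : Y.arrowMap a.2 (QuivRep.app g j x) = QuivRep.app g a.1 (X.arrowMap a.2 x) :=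
        (congrFun (congrArg (fun (w : X.vtx j ⟶ Y.vtx a.1) =>
          (w : ↥(X.vtx j) → ↥(Y.vtx a.1))) hgn) x).symm
      show M.arrowMap a.2 (QuivRep.app f j x) = H a.1 (Y.arrowMap a.2 (QuivRep.app g j x))
      rw [hfx, hgx]
      exact (LinearMap.congr_fun (IH a.1 ⟨a.2⟩).1 (X.arrowMap a.2 x)).symm
    have hbody : H j = (vertex_extension (hinj j) (MP j) (Φ j) (hfib j) (QuivRep.app g j)
        (hgmono j) (QuivRep.app f j) _ hcond).choose := by
      rw [hfix j]
      exact dif_pos hcond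
    obtain ⟨h1, h2⟩ := (vertex_extension (hinj j) (MP j) (Φ j) (hfib j) (QuivRep.app g j)
        (hgmono j) (QuivRep.app f j) _ hcond).choose_spec
    constructor
    · rw [hbody]; exact h1
    · intro i a
      apply LinearMap.ext
      intro y
      have := LinearMap.congr_fun h2 y
      have comp := congrFun this ⟨i, a⟩
      show M.arrowMap a (H j y) = H i (Y.arrowMap a y)
      rw [hbody]
      exact comp
  refine ⟨mkNat (M := Y) (N := M) H (by
    intro i j a x
    exact (LinearMap.congr_fun ((key i).2 j a) x).symm), ?_⟩
  set h := mkNat (M := Y) (N := M) H _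
  apply NatTrans.ext
  funext k
  show g.app k ≫ h.app k = f.app k
  apply ModuleCat.hom_ext
  exact (key k).1

end Backward
/-- Over a quasi-Frobenius ring `R` and a finite acyclic quiver, a representation is an
injective object of the category of representations if and only if it is RI-fibrant and
pointwise injective. -/
theorem injectiveObject_iff_isRIFibrant_and_pointwise_injective
    (R : Type) [Ring R] [IsQuasiFrobenius R]
    {V : Type} [Quiver.{1} V] (hV : IsFiniteAcyclic V) (M : QuivRep R V) :
    Injective M ↔ (M.IsRIFibrant ∧ ∀ j : V, Module.Injective R ↥(M.vtx j)) := by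
  constructor
  · intro hM
    haveI : ∀ (X : Paths V) (j : V), Small.{0} (X ⟶ (Paths.of V).obj j) := paths_small hV
    exact forward_direction M hM
  · rintro ⟨hfib, hinj⟩
    exact backward_direction hV M hfib hinj
end

section
/- Let Q be a finite acyclic quiver and R a quasi-Frobenius ring. If M ∈ Rep(Q,R) is a representation such that M_j is a projective (equivalently injective) R-module for every vertex j ∈ Q_0, then M has injective dimension at most 1 in Rep(Q,R): there exists a short exact sequence 0 → M → I⁰ → I¹ → 0 in Rep(Q,R) with I⁰ and I¹ injective objects of Rep(Q,R). (Applied to the regular representation, this says that the path algebra RQ is a 1-Gorenstein ring.) -/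
open CategoryTheory CategoryTheory.Limits

namespace QFAux


variable {R : Type} [Ring R]

theorem inj_pi {ι : Type} (E : ι → Type) [∀ i, AddCommGroup (E i)] [∀ i, Module R (E i)]
    (hE : ∀ i, Module.Injective R (E i)) : Module.Injective R (∀ i, E i) where
  out X Y _ _ _ _ f hf g := by
    choose h hh using fun i => (hE i).out f hf ((LinearMap.proj i) ∘ₗ g)
    exact ⟨LinearMap.pi h, fun x => funext fun i => hh i x⟩

theorem inj_retract {P N : Type} [AddCommGroup P] [Module R P] [AddCommGroup N] [Module R N]
    (i : P →ₗ[R] N) (r : N →ₗ[R] P) (hri : ∀ x, r (i x) = x)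
    (hN : Module.Injective R N) : Module.Injective R P where
  out X Y _ _ _ _ f hf g := by
    obtain ⟨h, hh⟩ := hN.out f hf (i ∘ₗ g)
    refine ⟨r ∘ₗ h, fun x => ?_⟩
    simp only [LinearMap.comp_apply] at hh ⊢
    rw [hh x, hri]

theorem inj_equiv {P N : Type} [AddCommGroup P] [Module R P] [AddCommGroup N] [Module R N]
    (e : N ≃ₗ[R] P) (hN : Module.Injective R N) : Module.Injective R P :=
  inj_retract e.symm.toLinearMap e.toLinearMap (fun x => e.apply_symm_apply x) hN

theorem inj_finsupp [IsNoetherianRing R] {ι N : Type} [AddCommGroup N] [Module R N]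
    (hN : Module.Injective R N) : Module.Injective R (ι →₀ N) := by
  apply Module.Baer.injective
  intro I g
  obtain ⟨T, hT⟩ := IsNoetherian.noetherian I
  have hTI : ∀ t ∈ T, t ∈ I := fun t ht => hT ▸ Submodule.subset_span ht
  classical
  set S : Finset ι := T.attach.sup (fun t => (g ⟨t.1, hTI t.1 t.2⟩).support) with hS
  have key : ∀ x (hxT : x ∈ Submodule.span R (T : Set R)), ∀ hx : x ∈ I,
      g ⟨x, hx⟩ ∈ Finsupp.supported N R (S : Set ι) := by
    intro x hxT
    induction hxT using Submodule.span_induction with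
    | mem t ht =>
        intro hx
        rw [Finsupp.mem_supported]
        exact Finset.coe_subset.2
          (Finset.le_sup (f := fun t : {x // x ∈ T} => (g ⟨t.1, hTI t.1 t.2⟩).support)
            (Finset.mem_attach T ⟨t, ht⟩))
    | zero =>
        intro hx
        have h0 : (⟨0, hx⟩ : I) = 0 := rfl
        rw [h0, map_zero]; exact Submodule.zero_mem _
    | add a b ha hb iha ihb =>
        intro hx
        have h0 : (⟨a + b, hx⟩ : I) = ⟨a, hT ▸ ha⟩ + ⟨b, hT ▸ hb⟩ := rfl
        rw [h0, map_add]; exact Submodule.add_mem _ (iha _) (ihb _)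
    | smul r a ha iha =>
        intro hx
        have h0 : (⟨r • a, hx⟩ : I) = r • ⟨a, hT ▸ ha⟩ := rfl
        rw [h0, map_smul]; exact Submodule.smul_mem _ _ (iha _)
  have hrange : ∀ x : I, g x ∈ Finsupp.supported N R (S : Set ι) := by
    rintro ⟨x, hx⟩
    exact key x (hT ▸ hx) hx
  have hsupp : Module.Injective R (Finsupp.supported N R (S : Set ι)) := by
    have e1 := Finsupp.supportedEquivFinsupp (M := N) (R := R) (α := ι) (S : Set ι)
    have e2 := Finsupp.linearEquivFunOnFinite R N (S : Set ι)
    exact inj_equiv (e1.trans e2).symm (inj_pi _ (fun _ => hN))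
  obtain ⟨G, hG⟩ := hsupp.out I.subtype I.injective_subtype
    (LinearMap.codRestrict _ g hrange)
  refine ⟨(Finsupp.supported N R (S : Set ι)).subtype ∘ₗ G, fun x mem => ?_⟩
  have := hG ⟨x, mem⟩
  simp only [LinearMap.comp_apply, Submodule.subtype_apply]
  have h2 : G x = (LinearMap.codRestrict (Finsupp.supported N R (S : Set ι)) g hrange) ⟨x, mem⟩ := this
  rw [h2]
  rfl


theorem projInj [IsQuasiFrobenius R] {P : Type} [AddCommGroup P] [Module R P]
    (hP : Module.Projective R P) : Module.Injective R P := by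
  haveI : IsNoetherianRing R := IsQuasiFrobenius.noetherian_left
  obtain ⟨s, hs⟩ := hP.out
  exact inj_retract s (Finsupp.linearCombination R id) hs
    (inj_finsupp IsQuasiFrobenius.selfInjective_left)

variable {V : Type} [Quiver.{1} V] [∀ i j : V, Small.{0} (i ⟶ j)]

/-- Paths out of a vertex. -/
abbrev PathsFrom (j : V) : Type 1 := Σ i : V, Quiver.Path j i

/-- Arrows out of a vertex. -/
abbrev ArrowsFrom (j : V) : Type 1 := Σ i : V, j ⟶ i

/-- Small paths (in `Type`). -/
inductive SP (a : V) : V → Type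
  | nil : SP a a
  | cons {b c : V} : SP a b → Shrink.{0} (b ⟶ c) → SP a c

/-- Composition of small paths. -/
def SP.comp {a b : V} : ∀ {c}, SP a b → SP b c → SP a c
  | _, p, .nil => p
  | _, p, .cons q e => (p.comp q).cons e

/-- Path to small path. -/
noncomputable def toSP {a : V} : ∀ {b}, Quiver.Path a b → SP a b
  | _, .nil => .nil
  | _, .cons p e => (toSP p).cons (equivShrink _ e)

/-- Small path to path. -/
noncomputable def ofSP {a : V} : ∀ {b}, SP a b → Quiver.Path a b
  | _, .nil => .nil
  | _, .cons p e => (ofSP p).cons ((equivShrink _).symm e)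

theorem toSP_ofSP {a b : V} (p : SP a b) : toSP (ofSP p) = p := by
  induction p with
  | nil => rfl
  | cons p e ih => simp only [ofSP, toSP, ih, Equiv.apply_symm_apply]

theorem ofSP_toSP {a b : V} (p : Quiver.Path a b) : ofSP (toSP p) = p := by
  induction p with
  | nil => rfl
  | cons p e ih => simp only [ofSP, toSP, ih, Equiv.symm_apply_apply]

theorem SP.nil_comp {a b : V} (p : SP a b) : (SP.nil : SP a a).comp p = p := by
  induction p with
  | nil => rfl
  | cons p e ih => simp only [SP.comp, ih]

theorem SP.comp_assoc {a b c d : V} (p : SP a b) (q : SP b c) (r : SP c d) :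
    (p.comp q).comp r = p.comp (q.comp r) := by
  induction r with
  | nil => rfl
  | cons r e ih => simp only [SP.comp, ih]

theorem toSP_comp {a b c : V} (p : Quiver.Path a b) (q : Quiver.Path b c) :
    toSP (p.comp q) = (toSP p).comp (toSP q) := by
  induction q with
  | nil => rfl
  | cons q e ih => simp only [Quiver.Path.comp, toSP, SP.comp, ih]

theorem ofSP_comp {a b c : V} (p : SP a b) (q : SP b c) :
    ofSP (p.comp q) = (ofSP p).comp (ofSP q) := by
  induction q with
  | nil => rfl
  | cons q e ih => simp only [Quiver.Path.comp, ofSP, SP.comp, ih]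

/-- View an object of the path category as a vertex. -/
def tv (j : Paths V) : V := j

/-- View a morphism of the path category as a path. -/
def tp {j k : Paths V} (q : j ⟶ k) : Quiver.Path (tv j) (tv k) := q

/-- View a path as a morphism in the path category. -/
noncomputable def homOfPath {j : Paths V} {i : V} (p : SP (tv j) i) : j ⟶ (Paths.of V).obj i := ofSP p

theorem homOfPath_comp {j k : Paths V} {i : V} (q : j ⟶ k) (p : SP (tv k) i) :
    homOfPath ((toSP (tp q)).comp p) = q ≫ homOfPath p := by
  show ofSP _ = (tp q).comp (ofSP p)
  rw [ofSP_comp, ofSP_toSP]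

/-- The coinduced representation of a family of modules. -/
noncomputable def Coind (E : V → ModuleCat.{0} R) : QuivRep R V where
  obj j := ModuleCat.of R (∀ i : V, SP (tv j) i → E i)
  map {j k} q := ModuleCat.ofHom
    { toFun := fun f i p => f i ((toSP (tp q)).comp p)
      map_add' := fun _ _ => rfl
      map_smul' := fun _ _ => rfl }
  map_id j := ModuleCat.hom_ext (LinearMap.ext fun f => funext fun i => funext fun p =>
    congrArg (f i) (SP.nil_comp p))
  map_comp {a b c} q r := ModuleCat.hom_ext (LinearMap.ext fun f => funext fun i => funext fun p => by
    show f i ((toSP (tp (q ≫ r))).comp p) = f i ((toSP (tp q)).comp ((toSP (tp r)).comp p))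
    rw [show tp (q ≫ r) = (tp q).comp (tp r) from rfl, toSP_comp, SP.comp_assoc])

/-- The coinduced representation of a pointwise injective family is an injective object. -/
theorem coind_injective (E : V → ModuleCat.{0} R) (hE : ∀ i, Module.Injective R ↥(E i)) :
    Injective (Coind (R := R) E) := by
  constructor
  intro A B g f hf
  rw [NatTrans.mono_iff_mono_app] at hf
  have hmono : ∀ i : V, Function.Injective (f.app ((Paths.of V).obj i)).hom := fun i =>
    (ModuleCat.mono_iff_injective _).1 (hf _)
  have hex : ∀ i : V, ∃ v : ↥(B.obj ((Paths.of V).obj i)) →ₗ[R] ↥(E i),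
      ∀ y, v ((f.app ((Paths.of V).obj i)).hom y) = (g.app ((Paths.of V).obj i)).hom y i SP.nil := by
    intro i
    exact (hE i).out (f.app ((Paths.of V).obj i)).hom (hmono i)
      ({ toFun := fun y => (g.app ((Paths.of V).obj i)).hom y i SP.nil
         map_add' := fun x y => by
           show (g.app ((Paths.of V).obj i)).hom (x + y) i SP.nil = _
           rw [map_add]; rfl
         map_smul' := fun r x => by
           show (g.app ((Paths.of V).obj i)).hom (r • x) i SP.nil = _
           rw [map_smul]; rfl })
  choose v hv using hex
  refine ⟨{ app := fun j => ModuleCat.ofHom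
              { toFun := fun x i p => v i ((B.map (homOfPath p)).hom x)
                map_add' := fun x y => by
                  funext i p
                  show v i ((B.map (homOfPath p)).hom (x + y)) = _
                  rw [map_add, map_add]; rfl
                map_smul' := fun r x => by
                  funext i p
                  show v i ((B.map (homOfPath p)).hom (r • x)) = _
                  rw [map_smul, map_smul]; rfl }
            naturality := fun {j k} q => ModuleCat.hom_ext (LinearMap.ext fun x => funext fun i => funext fun p => by
              show v i ((B.map (homOfPath p)).hom ((B.map q).hom x))
                = v i ((B.map (homOfPath ((toSP (tp q)).comp p))).hom x)
              rw [homOfPath_comp, B.map_comp]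
              rfl) }, ?_⟩
  apply NatTrans.ext
  funext j
  apply ModuleCat.hom_ext
  apply LinearMap.ext
  intro x
  funext i p
  show v i ((B.map (homOfPath p)).hom ((f.app j).hom x)) = (g.app j).hom x i p
  have h1 : (B.map (homOfPath p)).hom ((f.app j).hom x)
      = (f.app ((Paths.of V).obj i)).hom ((A.map (homOfPath p)).hom x) := by
    have := f.naturality (homOfPath p)
    exact (congrArg (fun l => ModuleCat.Hom.hom l x) this).symm
  rw [h1, hv]
  have h2 := g.naturality (homOfPath p)
  have h3 : (g.app ((Paths.of V).obj i)).hom ((A.map (homOfPath p)).hom x)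
      = ((Coind (R := R) E).map (homOfPath p)).hom ((g.app j).hom x) :=
    congrArg (fun l => ModuleCat.Hom.hom l x) h2
  rw [h3]
  show (g.app j).hom x i (toSP (ofSP p)) = _
  rw [toSP_ofSP]

variable (M : QuivRep R V)

/-- The canonical map from a representation into its coinduction. -/
noncomputable def toCoind : M ⟶ Coind (R := R) (fun i => M.vtx i) where
  app j := ModuleCat.ofHom
    { toFun := fun x i p => (M.map (homOfPath p)).hom x
      map_add' := fun x y => by funext i p; exact map_add _ x y
      map_smul' := fun r x => by funext i p; exact map_smul _ r x }
  naturality {j k} q := ModuleCat.hom_ext (LinearMap.ext fun x => funext fun i => funext fun p => by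
    show (M.map (homOfPath p)).hom ((M.map q).hom x)
      = (M.map (homOfPath ((toSP (tp q)).comp p))).hom x
    rw [homOfPath_comp, M.map_comp]
    rfl)

/-- The family of modules of arrows out of each vertex. -/
def arrTgt : V → ModuleCat.{0} R := fun i => ModuleCat.of R (∀ i' : V, Shrink.{0} (i ⟶ i') → ↥(M.vtx i'))

/-- The second map of the coresolution. -/
noncomputable def coindMapB : Coind (R := R) (fun i => M.vtx i) ⟶ Coind (R := R) (arrTgt M) where
  app j := ModuleCat.ofHom
    { toFun := fun f i p i' α =>
        (M.map (homOfPath (SP.cons SP.nil α))).hom (f i p) - f i' (p.cons α)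
      map_add' := fun x y => by
        funext i p i' α
        show (M.map (homOfPath (SP.cons SP.nil α))).hom (x i p + y i p)
          - (x i' (p.cons α) + y i' (p.cons α)) = _
        have hadd := map_add (M.map (homOfPath (SP.cons SP.nil α))).hom (x i p) (y i p)
        show _ = ((M.map (homOfPath (SP.cons SP.nil α))).hom (x i p) - x i' (p.cons α))
          + ((M.map (homOfPath (SP.cons SP.nil α))).hom (y i p) - y i' (p.cons α))
        refine (congrArg (· - (x i' (p.cons α) + y i' (p.cons α))) hadd).trans ?_
        exact add_sub_add_comm _ _ _ _
      map_smul' := fun r x => by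
        funext i p i' α
        show (M.map (homOfPath (SP.cons SP.nil α))).hom (r • x i p) - r • x i' (p.cons α) = _
        have hsm := map_smul (M.map (homOfPath (SP.cons SP.nil α))).hom r (x i p)
        refine (congrArg (· - r • x i' (p.cons α)) hsm).trans ?_
        show _ = r • ((M.map (homOfPath (SP.cons SP.nil α))).hom (x i p) - x i' (p.cons α))
        exact (smul_sub r _ _).symm }
  naturality {j k} q := ModuleCat.hom_ext (LinearMap.ext fun _ => rfl)

theorem toCoind_comp_coindMapB : toCoind M ≫ coindMapB M = 0 := by
  apply NatTrans.ext
  funext j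
  apply ModuleCat.hom_ext
  apply LinearMap.ext
  intro x
  funext i p i' α
  show (M.map (homOfPath (SP.cons SP.nil α))).hom ((M.map (homOfPath p)).hom x)
    - (M.map (homOfPath (p.cons α))).hom x = 0
  rw [show homOfPath (p.cons α) = homOfPath p ≫ homOfPath (SP.cons SP.nil α) from rfl, M.map_comp]
  exact sub_self _

theorem toCoind_app_injective (j : Paths V) : Function.Injective ((toCoind M).app j).hom := by
  intro x y hxy
  have h2 : (fun (i : V) (p : SP (tv j) i) => (M.map (homOfPath p)).hom x)
      = (fun (i : V) (p : SP (tv j) i) => (M.map (homOfPath p)).hom y) := hxy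
  have h3 := congrFun (congrFun h2 (tv j)) SP.nil
  have h4 : M.map (homOfPath (SP.nil (a := tv j))) = 𝟙 (M.obj j) := M.map_id j
  rw [h4] at h3
  exact h3

theorem coindMapB_app_surjective (j : Paths V) :
    Function.Surjective ((coindMapB M).app j).hom := by
  intro gg
  refine ⟨fun i p => SP.rec (motive := fun i' (p : SP (tv j) i') => ↥(M.vtx i'))
    0 (fun {b c} p α ih => (M.map (homOfPath (SP.cons SP.nil α))).hom ih - gg b p c α) p, ?_⟩
  funext i p i' α
  show (M.map (homOfPath (SP.cons SP.nil α))).hom _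
    - ((M.map (homOfPath (SP.cons SP.nil α))).hom _ - gg i p i' α) = gg i p i' α
  exact sub_sub_cancel _ _

theorem coind_exact_middle (j : Paths V) (f : ∀ i : V, SP (tv j) i → ↥(M.vtx i))
    (hf : ((coindMapB M).app j).hom f = 0) : ∃ x, ((toCoind M).app j).hom x = f := by
  have hf' : (fun (i : V) (p : SP (tv j) i) (i' : V) (α : Shrink.{0} (i ⟶ i')) =>
      (M.map (homOfPath (SP.cons SP.nil α))).hom (f i p) - f i' (p.cons α))
      = (fun _ _ _ _ => (0 : ↥(M.vtx _))) := hf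
  refine ⟨f (tv j) SP.nil, ?_⟩
  funext i p
  show (M.map (homOfPath p)).hom (f (tv j) SP.nil) = f i p
  induction p with
  | nil =>
      show (M.map (𝟙 j)).hom (f (tv j) SP.nil) = f (tv j) SP.nil
      rw [M.map_id]
      rfl
  | cons p α ih =>
      have h0 := congrFun (congrFun (congrFun (congrFun hf' _) p) _) α
      have h1 : f _ (p.cons α) = (M.map (homOfPath (SP.cons SP.nil α))).hom (f _ p) := by
        rw [sub_eq_zero] at h0; exact h0.symm
      rw [h1, ← ih]
      rw [show homOfPath (p.cons α) = homOfPath p ≫ homOfPath (SP.cons SP.nil α) from rfl,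
        M.map_comp]
      rfl

end QFAux

/-- Over a quasi-Frobenius ring and a finite acyclic quiver, a pointwise projective
representation has injective dimension at most one: it admits a short exact sequence
`0 → M → I⁰ → I¹ → 0` with `I⁰`, `I¹` injective objects. -/
theorem injdim_le_one_of_pointwise_projective
    (R : Type) [Ring R] [IsQuasiFrobenius R]
    {V : Type} [Quiver.{1} V] (hV : IsFiniteAcyclic V)
    (M : QuivRep R V) (hM : ∀ j : V, Module.Projective R ↥(M.vtx j)) :
    ∃ (I₀ I₁ : QuivRep R V), Injective I₀ ∧ Injective I₁ ∧
      ∃ (a : M ⟶ I₀) (b : I₀ ⟶ I₁) (w : a ≫ b = 0),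
        (ShortComplex.mk a b w).ShortExact := by
  classical
  haveI : ∀ i j : V, Small.{0} (i ⟶ j) := fun i j => by
    obtain ⟨_⟩ := hV.2.1 i j
    exact Countable.toSmall.{0} _
  refine ⟨QFAux.Coind (R := R) (fun i => M.vtx i), QFAux.Coind (R := R) (QFAux.arrTgt M),
    QFAux.coind_injective _ (fun i => QFAux.projInj (hM i)),
    QFAux.coind_injective _ (fun i => QFAux.inj_pi _
      (fun i' => QFAux.inj_pi _ (fun _ => QFAux.projInj (hM i')))),
    QFAux.toCoind M, QFAux.coindMapB M, QFAux.toCoind_comp_coindMapB M, ?_⟩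
  set S := ShortComplex.mk (QFAux.toCoind M) (QFAux.coindMapB M)
    (QFAux.toCoind_comp_coindMapB M) with hS
  have hje : ∀ j : Paths V,
      (S.map ((evaluation (Paths V) (ModuleCat.{0} R)).obj j)).ShortExact := by
    intro j
    have hmono : Mono (S.map ((evaluation (Paths V) (ModuleCat.{0} R)).obj j)).f :=
      (ModuleCat.mono_iff_injective _).2 (QFAux.toCoind_app_injective M j)
    have hepi : Epi (S.map ((evaluation (Paths V) (ModuleCat.{0} R)).obj j)).g :=
      (ModuleCat.epi_iff_surjective _).2 (QFAux.coindMapB_app_surjective M j)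
    refine ShortComplex.ShortExact.mk' ?_ hmono hepi
    rw [ShortComplex.moduleCat_exact_iff]
    intro f hf
    exact QFAux.coind_exact_middle M j f hf
  have hmono : Mono S.f := (NatTrans.mono_iff_mono_app _).2 (fun j => (hje j).mono_f)
  have hepi : Epi S.g := (NatTrans.epi_iff_epi_app _).2 (fun j => (hje j).epi_g)
  refine ShortComplex.ShortExact.mk' ?_ hmono hepi
  rw [ShortComplex.exact_iff_isZero_homology]
  apply CategoryTheory.Functor.isZero
  intro j
  exact ((S.mapHomologyIso ((evaluation (Paths V) (ModuleCat.{0} R)).obj j)).symm.isZero_iff).2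
    (((S.map ((evaluation (Paths V) (ModuleCat.{0} R)).obj j)).exact_iff_isZero_homology).1
      (hje j).exact)
end

section
/- Let Q be a finite acyclic quiver and R a quasi-Frobenius ring. If a representation K ∈ Rep(Q,R) has finite projective dimension, i.e. admits a finite resolution 0 → P_n → ⋯ → P_1 → P_0 → K → 0 by projective objects of Rep(Q,R), then K has projective dimension at most 1: there exists a short exact sequence 0 → S → T → K → 0 in Rep(Q,R) with S and T projective objects of Rep(Q,R). -/
open CategoryTheory CategoryTheory.Limits

/-- `ProjDimLE R V n K` : the representation `K` admits a projective resolution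
`0 → P_n → ⋯ → P_1 → P_0 → K → 0` of length at most `n`. -/
def ProjDimLE (R : Type) [Ring R] (V : Type) [Quiver.{1} V] :
    ℕ → QuivRep R V → Prop
  | 0, K => Projective K
  | n + 1, K => ∃ (P : QuivRep R V), Projective P ∧
      ∃ f : P ⟶ K, Epi f ∧ ProjDimLE R V n (kernel f)

/-! ### Auxiliary development -/

section ModulePart

variable (R : Type) [Ring R]

/-- Over a left Noetherian, left self-injective ring, free modules satisfy Baer's criterion. -/
lemma QFAux.finsupp_baer [IsNoetherianRing R] [Module.Injective R R] (ι : Type) :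
    Module.Baer R (ι →₀ R) := by
  intro I g
  obtain ⟨s, hs⟩ : I.FG := IsNoetherian.noetherian I
  classical
  set S : Finset ι := s.attach.biUnion
    (fun x => (g ⟨x.1, hs ▸ Submodule.subset_span x.2⟩).support) with hS
  have hsupp : ∀ (x : R) (hx : x ∈ I), ∀ i ∉ S, g ⟨x, hx⟩ i = 0 := by
    intro x hx i hiS
    have key : ∀ (y : R) (hy : y ∈ Ideal.span (s : Set R)), g ⟨y, hs ▸ hy⟩ i = 0 := by
      intro y hy
      induction hy using Submodule.span_induction with
      | mem z hz =>
          by_contra h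
          exact hiS (Finset.mem_biUnion.2 ⟨⟨z, hz⟩, s.mem_attach _, Finsupp.mem_support_iff.2 h⟩)
      | zero =>
          simp only [show ∀ (h : (0:R) ∈ I), (⟨(0:R), h⟩ : I) = 0 from fun _ => rfl, map_zero]
          rfl
      | add y z hy hz hy' hz' =>
          have : (⟨y + z, hs ▸ Submodule.add_mem _ hy hz⟩ : I) = ⟨y, hs ▸ hy⟩ + ⟨z, hs ▸ hz⟩ := rfl
          rw [this, map_add]
          simp [hy', hz']
      | smul r y hy hy' =>
          have : (⟨r • y, hs ▸ Submodule.smul_mem _ r hy⟩ : I) = r • (⟨y, hs ▸ hy⟩ : I) := rfl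
          rw [this, map_smul]
          simp [hy']
    exact key x (hs.symm ▸ hx)
  have hext : ∀ i : ι, ∃ h : R →ₗ[R] R, ∀ x : I, h x = g x i := by
    intro i
    obtain ⟨h, hh⟩ := Module.Injective.out (R := R) (Q := R) I.subtype Subtype.coe_injective
      ((Finsupp.lapply i).comp g)
    exact ⟨h, fun x => hh x⟩
  choose h hh using hext
  refine ⟨∑ i ∈ S, (Finsupp.lsingle i).comp (h i), fun x hx => ?_⟩
  ext j
  simp only [LinearMap.coe_sum, Finset.sum_apply, LinearMap.comp_apply,
    Finsupp.lsingle_apply, Finsupp.finset_sum_apply, Finsupp.single_apply]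
  by_cases hj : j ∈ S
  · rw [Finset.sum_eq_single j]
    · simp [hh j ⟨x, hx⟩]
    · intro b _ hb; simp [hb]
    · intro hj'; exact absurd hj hj'
  · rw [hsupp x hx j hj]
    apply Finset.sum_eq_zero
    intro b hb
    have : b ≠ j := fun e => hj (e ▸ hb)
    simp [this]

/-- Over a quasi-Frobenius ring, projective modules are injective. -/
lemma QFAux.injective_of_projective_module [IsQuasiFrobenius R]
    (M : Type) [AddCommGroup M] [Module R M] [Module.Projective R M] :
    Module.Injective R M := by
  haveI : IsNoetherianRing R := IsQuasiFrobenius.noetherian_left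
  haveI : Module.Injective R R := IsQuasiFrobenius.selfInjective_left
  have hfree : Module.Injective R (M →₀ R) := (QFAux.finsupp_baer R M).injective
  obtain ⟨s, hs⟩ := Module.projective_def'.1 (inferInstance : Module.Projective R M)
  constructor
  intro X Y _ _ _ _ f hf g
  obtain ⟨h, hh⟩ := hfree.out f hf (s ∘ₗ g)
  refine ⟨(Finsupp.linearCombination R id) ∘ₗ h, fun x => ?_⟩
  have := congrArg (fun (t : M →ₗ[R] M) => t (g x)) hs
  simpa [hh x] using this

end ModulePart

namespace QFAux

variable {R : Type} [Ring R] {V : Type} [Quiver.{1} V] [∀ a b : V, Small.{0} (Quiver.Hom.{1} a b)]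

lemma elem_nat {M N : QuivRep R V} (f : M ⟶ N) {k k' : Paths V} (p : k ⟶ k') (x : M.obj k) :
    f.app k' (M.map p x) = N.map p (f.app k x) :=
  congrArg (fun t : M.obj k ⟶ N.obj k' => t x) (f.naturality p)

lemma elem_map_comp (A : QuivRep R V) {k k' k'' : Paths V} (p : k ⟶ k') (q : k' ⟶ k'')
    (x : A.obj k) : A.map (p ≫ q) x = A.map q (A.map p x) :=
  congrArg (fun t : A.obj k ⟶ A.obj k'' => t x) (A.map_comp p q)

lemma elem_map_id (A : QuivRep R V) {k : Paths V} (x : A.obj k) : A.map (𝟙 k) x = x :=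
  congrArg (fun t : A.obj k ⟶ A.obj k => t x) (A.map_id k)

/-- Small copy of the paths of the quiver. -/
inductive SPath (a : V) : V → Type
  | nil : SPath a a
  | cons {b c : V} : SPath a b → Shrink.{0} (Quiver.Hom.{1} b c) → SPath a c

/-- From small paths to paths. -/
noncomputable def SPath.toPath {a : V} : ∀ {b : V}, SPath a b → Quiver.Path a b
  | _, SPath.nil => Quiver.Path.nil
  | _, SPath.cons p e => Quiver.Path.cons p.toPath ((equivShrink _).symm e)

/-- From paths to small paths. -/
noncomputable def SPath.ofPath {a : V} : ∀ {b : V}, Quiver.Path a b → SPath a b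
  | _, Quiver.Path.nil => SPath.nil
  | _, Quiver.Path.cons p e => SPath.cons (SPath.ofPath p) (equivShrink _ e)

lemma SPath.toPath_ofPath {a b : V} (p : Quiver.Path a b) : (SPath.ofPath p).toPath = p := by
  induction p with
  | nil => rfl
  | cons p e ih =>
      show Quiver.Path.cons (SPath.ofPath p).toPath ((equivShrink _).symm (equivShrink _ e)) = _
      rw [ih, Equiv.symm_apply_apply]

instance smallHom (a b : Paths V) : Small.{0} (a ⟶ b) :=
  small_of_surjective (f := fun p : SPath (V := V) a b => p.toPath)
    (fun p => ⟨SPath.ofPath p, SPath.toPath_ofPath p⟩)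

/-- Small model of the morphisms `a ⟶ b` of the path category. -/
abbrev SH (a b : Paths V) : Type := Shrink.{0} (a ⟶ b)

/-- Into the small model. -/
noncomputable def sh {a b : Paths V} (q : a ⟶ b) : SH a b := equivShrink _ q

/-- Out of the small model. -/
noncomputable def unsh {a b : Paths V} (s : SH a b) : a ⟶ b := (equivShrink _).symm s

@[simp] lemma unsh_sh {a b : Paths V} (q : a ⟶ b) : unsh (sh q) = q :=
  Equiv.symm_apply_apply _ _

@[simp] lemma sh_unsh {a b : Paths V} (s : SH a b) : sh (unsh s) = s :=
  Equiv.apply_symm_apply _ _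

/-- The coinduced representation attached to a family of modules `E i` placed at
vertices `v i` : its value at `k` is `∏ i, (k ⟶ v i) → E i`. -/
noncomputable def CoInd {ι : Type} (v : ι → Paths V) (E : ι → ModuleCat.{0} R) : QuivRep R V where
  obj k := ModuleCat.of R (∀ i : ι, SH k (v i) → E i)
  map {k k'} p := ModuleCat.ofHom
    { toFun := fun (f : ∀ i : ι, SH k (v i) → E i) i s => f i (sh (p ≫ unsh s))
      map_add' := fun f g => rfl
      map_smul' := fun r f => rfl }
  map_id k := by
    refine ModuleCat.hom_ext (LinearMap.ext fun (f : ∀ i : ι, SH k (v i) → E i) => ?_)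
    show (fun i s => f i (sh (𝟙 k ≫ unsh s))) = f
    funext i s
    rw [Category.id_comp, sh_unsh]
  map_comp {k k' k''} p p' := by
    refine ModuleCat.hom_ext (LinearMap.ext fun (f : ∀ i : ι, SH k (v i) → E i) => ?_)
    show (fun i s => f i (sh ((p ≫ p') ≫ unsh s))) =
      (fun i s => f i (sh (p ≫ unsh (sh (p' ≫ unsh s)))))
    funext i s
    rw [unsh_sh, Category.assoc]

@[simp] lemma CoInd_map_apply {ι : Type} (v : ι → Paths V) (E : ι → ModuleCat.{0} R)
    {k k' : Paths V} (p : k ⟶ k') (f : ∀ i : ι, SH k (v i) → E i) (i : ι) (q : SH k' (v i)) :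
    ((CoInd v E).map p f : ∀ i : ι, SH k' (v i) → E i) i q = f i (sh (p ≫ unsh q)) := rfl

/-- Evaluation of the coinduced representation at an index and a path, as a linear map. -/
noncomputable def evCoInd {ι : Type} {v : ι → Paths V} {E : ι → ModuleCat.{0} R} {k : Paths V}
    (i : ι) (q : k ⟶ v i) : (CoInd v E).obj k ⟶ E i := ModuleCat.ofHom
  { toFun := fun (f : ∀ i : ι, SH k (v i) → E i) => f i (sh q)
    map_add' := fun _ _ => rfl
    map_smul' := fun _ _ => rfl }

/-- The coinduced representation on an injective family is an injective object. -/
lemma coInd_injective {ι : Type} (v : ι → Paths V) (E : ι → ModuleCat.{0} R)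
    (hE : ∀ i, CategoryTheory.Injective (E i)) :
    CategoryTheory.Injective (CoInd (R := R) v E) := by
  constructor
  intro M N g f hf
  have hexts : ∀ i : ι, ∃ ψ' : N.obj (v i) ⟶ E i,
      f.app (v i) ≫ ψ' = g.app (v i) ≫ evCoInd i (𝟙 (v i)) := by
    intro i
    haveI := hE i
    haveI : Mono (f.app (v i)) := inferInstance
    exact ⟨Injective.factorThru _ (f.app (v i)), Injective.comp_factorThru _ _⟩
  choose ψ' hψ' using hexts
  let happ : ∀ k : Paths V, N.obj k ⟶ (CoInd (R := R) v E).obj k := fun k => ModuleCat.ofHom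
    { toFun := fun x => (fun i s => ψ' i (N.map (unsh s) x) : ∀ i : ι, SH k (v i) → E i)
      map_add' := by
        intro x y; funext i s
        show ψ' i (N.map (unsh s) (x + y)) = ψ' i (N.map (unsh s) x) + ψ' i (N.map (unsh s) y)
        rw [map_add, map_add]
      map_smul' := by
        intro r x; funext i s
        show ψ' i (N.map (unsh s) (r • x)) = r • ψ' i (N.map (unsh s) x)
        rw [map_smul, map_smul] }
  have hnat : ∀ {k k' : Paths V} (p : k ⟶ k'),
      N.map p ≫ happ k' = happ k ≫ (CoInd (R := R) v E).map p := by
    intro k k' p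
    refine ModuleCat.hom_ext (LinearMap.ext fun x => ?_)
    show (fun i s => ψ' i (N.map (unsh s) (N.map p x))) =
      (fun i s => ψ' i (N.map (unsh (sh (p ≫ unsh s))) x))
    funext i s
    rw [unsh_sh, elem_map_comp]
  refine ⟨{ app := happ, naturality := fun _ _ p => hnat p }, ?_⟩
  refine NatTrans.ext (funext fun k => ?_)
  refine ModuleCat.hom_ext (LinearMap.ext fun x => ?_)
  show (fun i s => ψ' i (N.map (unsh s) (f.app k x))) = (g.app k x : ∀ i : ι, SH k (v i) → E i)
  funext i s
  rw [← elem_nat f (unsh s) x]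
  have h2 := congrArg (fun (t : M.obj (v i) ⟶ E i) => t (M.map (unsh s) x)) (hψ' i)
  have h2' : ψ' i (f.app (v i) (M.map (unsh s) x)) =
      (g.app (v i) (M.map (unsh s) x) : ∀ i' : ι, SH (v i) (v i') → E i') i (sh (𝟙 (v i))) := h2
  rw [h2', elem_nat g (unsh s) x]
  show (g.app k x : ∀ i : ι, SH k (v i) → E i) i (sh (unsh s ≫ unsh (sh (𝟙 (v i))))) =
    (g.app k x : ∀ i : ι, SH k (v i) → E i) i s
  rw [unsh_sh, Category.comp_id, sh_unsh]

/-- A projective representation is projective at each vertex. -/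
lemma vtx_projective (A : QuivRep R V) (hA : Projective A) (j : Paths V) :
    Projective (A.obj j) := by
  constructor
  intro E X φ e he
  let CE := CoInd (R := R) (fun _ : PUnit => j) (fun _ => E)
  let CX := CoInd (R := R) (fun _ : PUnit => j) (fun _ => X)
  have hesurj : Function.Surjective e := (ModuleCat.epi_iff_surjective e).1 he
  let eRep : CE ⟶ CX :=
    { app := fun k => ModuleCat.ofHom
        { toFun := fun (fᵢ : ∀ _ : PUnit, SH k j → E) =>
            (fun i q => e (fᵢ i q) : ∀ _ : PUnit, SH k j → X)
          map_add' := fun x y => by funext i q; exact map_add e.hom (x i q) (y i q)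
          map_smul' := fun r x => by funext i q; exact map_smul e.hom r (x i q) }
      naturality := fun k k' p => rfl }
  haveI : ∀ k, Epi (eRep.app k) := by
    intro k
    rw [ModuleCat.epi_iff_surjective]
    intro t
    let t' : ∀ _ : PUnit, SH k j → X := t
    refine ⟨(fun i q => (hesurj (t' i q)).choose : ∀ _ : PUnit, SH k j → E), ?_⟩
    show (fun i q => e ((hesurj (t' i q)).choose) : ∀ _ : PUnit, SH k j → X) = t'
    funext i q; exact (hesurj (t' i q)).choose_spec
  haveI : Epi eRep := NatTrans.epi_of_epi_app eRep
  let ηφ : A ⟶ CX :=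
    { app := fun k => ModuleCat.ofHom
        { toFun := fun x => (fun _ q => φ (A.map (unsh q) x) : ∀ _ : PUnit, SH k j → X)
          map_add' := fun x y => by
            funext i q
            show φ (A.map (unsh q) (x + y)) = φ (A.map (unsh q) x) + φ (A.map (unsh q) y)
            rw [map_add, map_add]
          map_smul' := fun r x => by
            funext i q
            show φ (A.map (unsh q) (r • x)) = r • φ (A.map (unsh q) x)
            rw [map_smul, map_smul] }
      naturality := by
        intro k k' p
        refine ModuleCat.hom_ext (LinearMap.ext fun x => ?_)
        show (fun (_ : PUnit) q => φ (A.map (unsh q) (A.map p x))) =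
          (fun (_ : PUnit) q => φ (A.map (unsh (sh (p ≫ unsh q))) x))
        funext i q
        rw [unsh_sh, elem_map_comp] }
  haveI := hA
  let L : A ⟶ CE := Projective.factorThru ηφ eRep
  have hL : L ≫ eRep = ηφ := Projective.factorThru_comp _ _
  refine ⟨L.app j ≫ evCoInd (E := fun _ : PUnit => E) PUnit.unit (𝟙 j), ?_⟩
  refine ModuleCat.hom_ext (LinearMap.ext fun x => ?_)
  show e ((L.app j x : ∀ _ : PUnit, SH j j → E) PUnit.unit (sh (𝟙 j))) = φ x
  have h1 := congrArg (fun (t : A ⟶ CX) =>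
    (t.app j x : ∀ _ : PUnit, SH j j → X) PUnit.unit (sh (𝟙 j))) hL
  have h1' : e ((L.app j x : ∀ _ : PUnit, SH j j → E) PUnit.unit (sh (𝟙 j))) =
      φ (A.map (unsh (sh (𝟙 j))) x) := h1
  rw [h1', unsh_sh, elem_map_id]

/-- A projective representation is injective at each vertex (quasi-Frobenius base ring). -/
lemma vtx_injective [IsQuasiFrobenius R] (A : QuivRep R V) (hA : Projective A) (j : Paths V) :
    CategoryTheory.Injective (A.obj j) := by
  have hp : Projective (A.obj j) := vtx_projective A hA j
  have hp' : Module.Projective R (A.obj j) := by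
    rw [IsProjective.iff_projective.{0,0}]
    exact hp
  haveI := hp'
  have hi : Module.Injective R (A.obj j) := QFAux.injective_of_projective_module R _
  exact Module.injective_object_of_injective_module R (A.obj j) (inj := hi)

/-- The index type of arrows of a quiver. -/
def ArrIdx (V : Type) [Quiver.{1} V] [∀ a b : V, Small.{0} (Quiver.Hom.{1} a b)] : Type :=
  Σ i j : V, Shrink.{0} (Quiver.Hom.{1} i j)

/-- The arrow underlying an index. -/
noncomputable def ArrIdx.arr (a : ArrIdx V) : Quiver.Hom.{1} a.1 a.2.1 := (equivShrink _).symm a.2.2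

variable (A : QuivRep R V)

/-- First coinduced representation: at `k`, `∏ j, (k ⟶ j) → A j`. -/
noncomputable def I0 : QuivRep R V := CoInd (fun j : Paths V => j) (fun j => A.obj j)

/-- Second coinduced representation: at `k`, `∏ (a : i ⟶ j), (k ⟶ i) → A j`. -/
noncomputable def I1 : QuivRep R V :=
  CoInd (fun a : ArrIdx V => (Paths.of V).obj a.1) (fun a => A.obj ((Paths.of V).obj a.2.1))

/-- The unit `A ⟶ I0 A`. -/
noncomputable def epsRep : A ⟶ I0 A where
  app k := ModuleCat.ofHom
    { toFun := fun x => (fun j q => A.map (unsh q) x : ∀ j : Paths V, SH k j → A.obj j)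
      map_add' := fun x y => by
        funext j q
        show A.map (unsh q) (x + y) = A.map (unsh q) x + A.map (unsh q) y
        rw [map_add]
      map_smul' := fun r x => by
        funext j q
        show A.map (unsh q) (r • x) = r • A.map (unsh q) x
        rw [map_smul] }
  naturality := by
    intro k k' p
    refine ModuleCat.hom_ext (LinearMap.ext fun x => ?_)
    show (fun j q => A.map (unsh q) (A.map p x)) = (fun j q => A.map (unsh (sh (p ≫ unsh q))) x)
    funext j q
    rw [unsh_sh, elem_map_comp]

/-- The differential `I0 A ⟶ I1 A`. -/
noncomputable def dRep : I0 A ⟶ I1 A where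
  app k := ModuleCat.ofHom
    { toFun := fun (y : ∀ j : Paths V, SH k j → A.obj j) =>
        (fun a q =>
          A.map ((Paths.of V).map a.arr) (y ((Paths.of V).obj a.1) q) -
            y ((Paths.of V).obj a.2.1) (sh (unsh q ≫ (Paths.of V).map a.arr)) :
          ∀ a : ArrIdx V, SH k ((Paths.of V).obj a.1) → A.obj ((Paths.of V).obj a.2.1))
      map_add' := fun x y => by
        funext a q
        show A.map ((Paths.of V).map a.arr) (x _ q + y _ q) -
            (x _ (sh (unsh q ≫ (Paths.of V).map a.arr)) +
              y _ (sh (unsh q ≫ (Paths.of V).map a.arr))) =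
          (A.map ((Paths.of V).map a.arr) (x _ q) - x _ (sh (unsh q ≫ (Paths.of V).map a.arr))) +
          (A.map ((Paths.of V).map a.arr) (y _ q) - y _ (sh (unsh q ≫ (Paths.of V).map a.arr)))
        rw [map_add]
        abel
      map_smul' := fun r x => by
        funext a q
        show A.map ((Paths.of V).map a.arr) (r • x _ q) -
            r • x _ (sh (unsh q ≫ (Paths.of V).map a.arr)) =
          r • (A.map ((Paths.of V).map a.arr) (x _ q) -
            x _ (sh (unsh q ≫ (Paths.of V).map a.arr)))
        rw [map_smul]
        rw [← smul_sub] }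
  naturality := by
    intro k k' p
    refine ModuleCat.hom_ext (LinearMap.ext fun (y : ∀ j : Paths V, SH k j → A.obj j) => ?_)
    funext a q
    show A.map ((Paths.of V).map a.arr) (y _ (sh (p ≫ unsh q))) -
        y _ (sh (p ≫ unsh (sh (unsh q ≫ (Paths.of V).map a.arr)))) =
      A.map ((Paths.of V).map a.arr) (y _ (sh (p ≫ unsh q))) -
        y _ (sh (unsh (sh (p ≫ unsh q)) ≫ (Paths.of V).map a.arr))
    simp only [unsh_sh, Category.assoc]

lemma eps_comp_d : epsRep A ≫ dRep A = 0 := by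
  refine NatTrans.ext (funext fun k => ?_)
  refine ModuleCat.hom_ext (LinearMap.ext fun x => ?_)
  funext a q
  show A.map ((Paths.of V).map a.arr) (A.map (unsh q) x) -
    A.map (unsh (sh (unsh q ≫ (Paths.of V).map a.arr))) x = 0
  rw [unsh_sh, elem_map_comp, sub_self]

instance : Mono (epsRep A) := by
  haveI : ∀ k, Mono ((epsRep A).app k) := by
    intro k
    rw [ModuleCat.mono_iff_injective]
    intro x y hxy
    have hxy' : ((epsRep A).app k x : ∀ j : Paths V, SH k j → A.obj j) = (epsRep A).app k y := hxy
    have := congrFun (congrFun hxy' k) (sh (𝟙 k))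
    have h2 : A.map (unsh (sh (𝟙 k))) x = A.map (unsh (sh (𝟙 k))) y := this
    rwa [unsh_sh, elem_map_id, elem_map_id] at h2
  exact NatTrans.mono_of_mono_app _

/-- Recursive construction of preimages for the differential. -/
noncomputable def sec {k : Paths V}
    (z : ∀ a : ArrIdx V, SH k ((Paths.of V).obj a.1) → A.obj ((Paths.of V).obj a.2.1)) :
    ∀ {j : Paths V}, (k ⟶ j) → A.obj j
  | _, Quiver.Path.nil => 0
  | _, Quiver.Path.cons p e => A.map ((Paths.of V).map e) (sec z p) - z ⟨_, _, equivShrink _ e⟩ (sh p)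

instance : Epi (dRep A) := by
  have : ∀ k, Epi ((dRep A).app k) := by
    intro k
    rw [ModuleCat.epi_iff_surjective]
    intro z
    let z' : ∀ a : ArrIdx V, SH k ((Paths.of V).obj a.1) → A.obj ((Paths.of V).obj a.2.1) := z
    refine ⟨(fun j q => sec A z' (unsh q) : ∀ j : Paths V, SH k j → A.obj j), ?_⟩
    show (fun a q => A.map ((Paths.of V).map a.arr) (sec A z' (unsh q)) -
        sec A z' (unsh (sh (unsh q ≫ (Paths.of V).map a.arr)))) = z'
    funext a q
    obtain ⟨i0, j0, e'⟩ := a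
    obtain ⟨e, rfl⟩ := (equivShrink (Quiver.Hom.{1} i0 j0)).surjective e'
    show A.map ((Paths.of V).map (ArrIdx.arr (⟨i0, j0, equivShrink _ e⟩ : ArrIdx V)))
        (sec A z' (unsh q)) - sec A z' (unsh (sh (unsh q ≫ (Paths.of V).map
          (ArrIdx.arr (⟨i0, j0, equivShrink _ e⟩ : ArrIdx V))))) = z' ⟨i0, j0, equivShrink _ e⟩ q
    have harr : ArrIdx.arr (⟨i0, j0, equivShrink _ e⟩ : ArrIdx V) = e := Equiv.symm_apply_apply _ _
    rw [harr, unsh_sh]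
    have hq : (unsh q ≫ (Paths.of V).map e) = Quiver.Path.cons (unsh q) e := rfl
    rw [hq]
    show A.map ((Paths.of V).map e) (sec A z' (unsh q)) -
      (A.map ((Paths.of V).map e) (sec A z' (unsh q)) - z' ⟨i0, j0, equivShrink _ e⟩ (sh (unsh q))) =
        z' ⟨i0, j0, equivShrink _ e⟩ q
    rw [sh_unsh]
    abel
  exact NatTrans.epi_of_epi_app _

/-- Elements of the kernel of the differential are in the image of the unit. -/
lemma ker_d_elem {k : Paths V} (y : ∀ j : Paths V, SH k j → A.obj j)
    (hy : (dRep A).app k y = 0)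
    {j : Paths V} (q : k ⟶ j) : y j (sh q) = A.map q (y k (sh (𝟙 k))) := by
  have hy' : ((dRep A).app k y : ∀ a : ArrIdx V, SH k ((Paths.of V).obj a.1) →
      A.obj ((Paths.of V).obj a.2.1)) = 0 := hy
  induction q using Paths.induction_fixed_source with
  | id => rw [elem_map_id]
  | @comp u w p e ih =>
      have h0 := congrFun (congrFun hy' (⟨u, w, equivShrink _ e⟩ : ArrIdx V)) (sh p)
      have h0' : A.map ((Paths.of V).map (ArrIdx.arr (⟨u, w, equivShrink _ e⟩ : ArrIdx V)))
          (y _ (sh p)) - y _ (sh (unsh (sh p) ≫ (Paths.of V).map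
            (ArrIdx.arr (⟨u, w, equivShrink _ e⟩ : ArrIdx V)))) = 0 := h0
      have harr : ArrIdx.arr (⟨u, w, equivShrink _ e⟩ : ArrIdx V) = e := Equiv.symm_apply_apply _ _
      rw [unsh_sh, harr] at h0'
      have : y _ (sh (p ≫ (Paths.of V).map e)) = A.map ((Paths.of V).map e) (y _ (sh p)) :=
        (sub_eq_zero.mp h0').symm
      rw [this, ih, ← elem_map_comp]

/-- The unit is the kernel of the differential: lifting property. -/
lemma lift_through_eps {X : QuivRep R V} (u : X ⟶ I0 A) (hu : u ≫ dRep A = 0) :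
    ∃ r : X ⟶ A, r ≫ epsRep A = u := by
  have hker : ∀ (k : Paths V) (x : X.obj k), (dRep A).app k (u.app k x) = 0 := by
    intro k x
    have := congrArg (fun (t : X ⟶ I1 A) => t.app k x) hu
    exact this
  refine ⟨{ app := fun k => u.app k ≫ evCoInd (v := fun j : Paths V => j) k (𝟙 k)
            naturality := ?_ }, ?_⟩
  · intro k k' p
    refine ModuleCat.hom_ext (LinearMap.ext fun x => ?_)
    show (u.app k' (X.map p x) : ∀ j : Paths V, SH k' j → A.obj j) k' (sh (𝟙 k')) =
      A.map p ((u.app k x : ∀ j : Paths V, SH k j → A.obj j) k (sh (𝟙 k)))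
    rw [elem_nat u p x]
    show (u.app k x : ∀ j : Paths V, SH k j → A.obj j) k' (sh (p ≫ unsh (sh (𝟙 k')))) =
      A.map p ((u.app k x : ∀ j : Paths V, SH k j → A.obj j) k (sh (𝟙 k)))
    rw [unsh_sh, Category.comp_id]
    exact ker_d_elem A (u.app k x) (hker k x) p
  · refine NatTrans.ext (funext fun k => ?_)
    refine ModuleCat.hom_ext (LinearMap.ext fun x => ?_)
    funext j q
    show A.map (unsh q) ((u.app k x : ∀ j : Paths V, SH k j → A.obj j) k (sh (𝟙 k))) =
      (u.app k x : ∀ j : Paths V, SH k j → A.obj j) j q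
    have := (ker_d_elem A (u.app k x) (hker k x) (unsh q)).symm
    rwa [sh_unsh] at this

/-- Injective coresolution of a projective representation. -/
lemma exists_coresolution [IsQuasiFrobenius R] (hA : Projective A) :
    ∃ (J0 J1 : QuivRep R V) (ε : A ⟶ J0) (d : J0 ⟶ J1),
      CategoryTheory.Injective J0 ∧ CategoryTheory.Injective J1 ∧ Mono ε ∧ Epi d ∧
      ε ≫ d = 0 ∧ ∀ ⦃X : QuivRep R V⦄ (u : X ⟶ J0), u ≫ d = 0 → ∃ r : X ⟶ A, r ≫ ε = u :=
  ⟨I0 A, I1 A, epsRep A, dRep A,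
    coInd_injective _ _ (fun j => vtx_injective A hA j),
    coInd_injective _ _ (fun a => vtx_injective A hA ((Paths.of V).obj a.2.1)),
    inferInstance, inferInstance, eps_comp_d A, fun X u hu => lift_through_eps A u hu⟩


/-- If the kernel of an epimorphism `q : T ⟶ B` is projective, `T` is projective, and `B`
embeds in a projective object, then `B` is projective. -/
lemma projective_of_syzygy [IsQuasiFrobenius R] {T B P : QuivRep R V}
    (q : T ⟶ B) [Epi q] (hker : Projective (kernel q)) (hT : Projective T)
    (μ : B ⟶ P) [Mono μ] (hP : Projective P) : Projective B := by
  obtain ⟨J0, J1, ε, d, hJ0, hJ1, hmono, hepi, hεd, hlift⟩ :=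
    exists_coresolution (kernel q) hker
  haveI := hJ0; haveI := hJ1; haveI := hmono; haveI := hepi; haveI := hP
  let u : T ⟶ J0 := Injective.factorThru ε (kernel.ι q)
  have hu : kernel.ι q ≫ u = ε := Injective.comp_factorThru _ _
  have h1 : kernel.ι q ≫ u ≫ d = 0 := by rw [← Category.assoc, hu, hεd]
  let g' : B ⟶ J1 := Abelian.epiDesc q (u ≫ d) h1
  have hg' : q ≫ g' = u ≫ d := Abelian.comp_epiDesc q (u ≫ d) h1
  let G : P ⟶ J1 := Injective.factorThru g' μ
  have hG : μ ≫ G = g' := Injective.comp_factorThru _ _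
  let H : P ⟶ J0 := Projective.factorThru G d
  have hH : H ≫ d = G := Projective.factorThru_comp _ _
  have h2 : (u - q ≫ μ ≫ H) ≫ d = 0 := by
    rw [Preadditive.sub_comp]
    simp only [Category.assoc]
    rw [hH, hG, hg', sub_self]
  obtain ⟨r, hr⟩ := hlift _ h2
  have hri : kernel.ι q ≫ r = 𝟙 (kernel q) := by
    rw [← cancel_mono ε, Category.assoc, hr, Preadditive.comp_sub, hu, Category.id_comp,
      ← Category.assoc, kernel.condition, zero_comp, sub_zero]
  have h3 : kernel.ι q ≫ (𝟙 T - r ≫ kernel.ι q) = 0 := by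
    rw [Preadditive.comp_sub, Category.comp_id, ← Category.assoc, hri, Category.id_comp,
      sub_self]
  let s : B ⟶ T := Abelian.epiDesc q (𝟙 T - r ≫ kernel.ι q) h3
  have hs : q ≫ s = 𝟙 T - r ≫ kernel.ι q := Abelian.comp_epiDesc _ _ h3
  have hsq : s ≫ q = 𝟙 B := by
    rw [← cancel_epi q, ← Category.assoc, hs, Preadditive.sub_comp, Category.id_comp,
      Category.assoc, kernel.condition, comp_zero, sub_zero, Category.comp_id]
  constructor
  intro E X f e he
  haveI := hT
  refine ⟨s ≫ Projective.factorThru (q ≫ f) e, ?_⟩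
  rw [Category.assoc, Projective.factorThru_comp, ← Category.assoc, hsq, Category.id_comp]

/-- Zero objects are projective. -/
lemma projective_of_isZero {C : Type*} [Category C] {X : C} (hX : IsZero X) :
    Projective X := by
  constructor
  intro E Y f e he
  exact ⟨hX.to_ E, hX.eq_of_src _ _⟩

end QFAux

/-- Any representation of finite projective dimension has projective dimension at most `1`. -/
lemma QFAux.projDimLE_one {R : Type} [Ring R] [IsQuasiFrobenius R]
    {V : Type} [Quiver.{1} V] [∀ a b : V, Small.{0} (Quiver.Hom.{1} a b)] :
    ∀ (n : ℕ) (K : QuivRep R V), ProjDimLE R V n K → ProjDimLE R V 1 K := by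
  intro n
  induction n with
  | zero =>
      intro K hK
      have hKproj : Projective K := hK
      haveI := hKproj
      refine ⟨K, hKproj, 𝟙 K, inferInstance, ?_⟩
      show Projective (kernel (𝟙 K))
      exact QFAux.projective_of_isZero
        (IsZero.of_iso (isZero_zero _) (kernel.ofMono (𝟙 K)))
  | succ n ih =>
      intro K hK
      obtain ⟨P, hP, f, hf, hke⟩ := hK
      haveI := hf
      obtain ⟨T, hT, qm, hq, hA⟩ := ih _ hke
      haveI := hq
      have hA' : Projective (kernel qm) := hA
      have : Projective (kernel f) :=
        QFAux.projective_of_syzygy qm hA' hT (kernel.ι f) hP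
      exact ⟨P, hP, f, hf, this⟩



/-- Over a quasi-Frobenius ring and a finite acyclic quiver, a representation of finite
projective dimension has projective dimension at most one: it admits a short exact sequence
`0 → S → T → K → 0` with `S`, `T` projective objects. -/
theorem projdim_le_one_of_finite_projdim
    (R : Type) [Ring R] [IsQuasiFrobenius R]
    {V : Type} [Quiver.{1} V] (hV : IsFiniteAcyclic V)
    (K : QuivRep R V) (hK : ∃ n : ℕ, ProjDimLE R V n K) :
    ∃ (S T : QuivRep R V), Projective S ∧ Projective T ∧
      ∃ (a : S ⟶ T) (b : T ⟶ K) (w : a ≫ b = 0),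
        (ShortComplex.mk a b w).ShortExact := by
  obtain ⟨n, hn⟩ := hK
  haveI : ∀ a b : V, Small.{0} (Quiver.Hom.{1} a b) := fun a b => by
    obtain ⟨_⟩ := hV.2.1 a b
    exact small_of_injective (Fintype.equivFin (Quiver.Hom.{1} a b)).injective
  obtain ⟨T, hT, b, hb, hS⟩ := QFAux.projDimLE_one n K hn
  haveI := hb
  have hSproj : Projective (kernel b) := hS
  refine ⟨kernel b, T, hSproj, hT, kernel.ι b, b, kernel.condition b, ?_⟩
  haveI : Mono (ShortComplex.mk (kernel.ι b) b (kernel.condition b)).f :=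
    (inferInstance : Mono (kernel.ι b))
  haveI : Epi (ShortComplex.mk (kernel.ι b) b (kernel.condition b)).g := hb
  refine { exact := ?_ }
  exact ShortComplex.exact_of_f_is_kernel _ (kernelIsKernel b)
end

section
/- Let Q be a finite acyclic quiver and R a quasi-Frobenius ring. A representation M ∈ Rep(Q,R) is monic if and only if M has the following lifting property: for every morphism p : X → Y in Rep(Q,R) such that for each vertex j the component p_j : X_j → Y_j is surjective and a stable equivalence of R-modules, and for every morphism q : M → Y, there exists a morphism h : M → X in Rep(Q,R) with p ∘ h = q. -/
open CategoryTheory CategoryTheory.Limits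

/-! ### Auxiliary lemmas -/

section Cogen

variable {R : Type} [Ring R]

/-- right multiplication as a left-linear map -/
def mulRightLin (c : R) : R →ₗ[R] R where
  toFun x := x * c
  map_add' x y := add_mul x y c
  map_smul' r x := by simp [smul_eq_mul, mul_assoc]

lemma exists_linearMap_toRing_ne_zero [IsQuasiFrobenius R] {N : Type*} [AddCommGroup N]
    [Module R N] (z : N) (hz : z ≠ 0) : ∃ φ : N →ₗ[R] R, φ z ≠ 0 := by
  classical
  haveI : IsNoetherianRing R := IsQuasiFrobenius.noetherian_left
  set I : Ideal R := LinearMap.ker (LinearMap.toSpanSingleton R N z) with hI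
  have h1 : (1 : R) ∉ I := by
    simp only [hI, LinearMap.mem_ker, LinearMap.toSpanSingleton_apply, one_smul]
    exact hz
  -- I is finitely generated
  obtain ⟨S, hS⟩ : I.FG := IsNoetherian.noetherian I
  -- find 0 ≠ c with I * c = 0
  have hc : ∃ c : R, c ≠ 0 ∧ ∀ a ∈ I, a * c = 0 := by
    -- the map ψ : Rᵐᵒᵖ → (S → Rᵐᵒᵖ), x ↦ (x * op a)ₐ
    set ψ : Rᵐᵒᵖ →ₗ[Rᵐᵒᵖ] (↥(S : Set R) → Rᵐᵒᵖ) :=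
      LinearMap.pi (fun a : ↥(S : Set R) => mulRightLin (MulOpposite.op a.1)) with hψ
    by_cases hinj : Function.Injective ψ
    · exfalso
      obtain ⟨g, hg⟩ := IsQuasiFrobenius.selfInjective_right.out ψ hinj LinearMap.id
      -- 1 = g (ψ 1), and ψ 1 = fun a => op a
      have e1 : ψ (1 : Rᵐᵒᵖ) = fun a : ↥(S : Set R) => MulOpposite.op a.1 := by
        funext a; simp [hψ, mulRightLin, LinearMap.pi_apply]
      have e2 : (1 : Rᵐᵒᵖ) = g (fun a : ↥(S : Set R) => MulOpposite.op a.1) := by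
        rw [← e1, hg]; rfl
      -- expand g over the finite sum of singles
      have e3 : (fun a : ↥(S : Set R) => MulOpposite.op a.1) =
          ∑ a : ↥(S : Set R), Pi.single a (MulOpposite.op a.1) := by
        rw [Finset.univ_sum_single]
      have e4 : g (fun a : ↥(S : Set R) => MulOpposite.op a.1) =
          ∑ a : ↥(S : Set R), MulOpposite.op a.1 * g (Pi.single (M := fun _ => Rᵐᵒᵖ) a 1) := by
        rw [e3, map_sum]
        refine Finset.sum_congr rfl fun a _ => ?_
        have h5 : Pi.single (M := fun _ => Rᵐᵒᵖ) a (MulOpposite.op a.1) =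
            (MulOpposite.op a.1) • Pi.single (M := fun _ => Rᵐᵒᵖ) a 1 := by
          funext b
          by_cases hb : b = a
          · subst hb; simp
          · simp [Pi.single_apply, hb]
        rw [h5, map_smul, smul_eq_mul]
      have mem1 : (1 : R) ∈ I := by
        have h6 : (1 : R) = ∑ a : ↥(S : Set R), MulOpposite.unop (g (Pi.single (M := fun _ => Rᵐᵒᵖ) a 1)) * a.1 := by
          have h7 := e2.trans e4
          have h8 := congrArg MulOpposite.unop h7
          simpa using h8
        rw [h6]
        refine Ideal.sum_mem I fun a _ => ?_
        have haI : (a.1 : R) ∈ I := by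
          rw [← hS]; exact Ideal.subset_span a.2
        exact Ideal.mul_mem_left I _ haI
      exact h1 mem1
    · -- ψ not injective: get c
      rw [injective_iff_map_eq_zero] at hinj
      push_neg at hinj
      obtain ⟨x, hx0, hxne⟩ := hinj
      refine ⟨MulOpposite.unop x, by simpa using hxne, ?_⟩
      -- generators kill c, and {a | a * c = 0} is a left ideal containing S
      have hgen : ∀ a ∈ S, a * MulOpposite.unop x = 0 := by
        intro a ha
        have h9 : ψ x ⟨a, ha⟩ = 0 := by rw [hx0]; rfl
        have h10 : x * MulOpposite.op a = 0 := by
          simpa [hψ, mulRightLin, LinearMap.pi_apply] using h9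
        have h11 := congrArg MulOpposite.unop h10
        simpa using h11
      set J : Ideal R :=
        { carrier := {a : R | a * MulOpposite.unop x = 0}
          add_mem' := fun {a b} ha hb => by
            simp only [Set.mem_setOf_eq] at *; rw [add_mul, ha, hb, add_zero]
          zero_mem' := by simp
          smul_mem' := fun r a ha => by
            simp only [Set.mem_setOf_eq, smul_eq_mul] at *
            rw [mul_assoc, ha, mul_zero] } with hJ
      intro a haI
      have hIJ : I ≤ J := by
        rw [← hS, Ideal.span_le]
        intro b hb
        exact hgen b hb
      exact hIJ haI
  obtain ⟨c, hc0, hcI⟩ := hc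
  -- θ : R ⧸ I → N injective, ρ : R ⧸ I → R
  have hker : I ≤ LinearMap.ker (mulRightLin c) := fun a ha => by
    simpa [mulRightLin] using hcI a ha
  obtain ⟨φ, hφ⟩ := Module.Injective.extension_property R R _ _ (inj := IsQuasiFrobenius.selfInjective_left)
    (Submodule.liftQ I (LinearMap.toSpanSingleton R N z) le_rfl)
    (by rw [← LinearMap.ker_eq_bot, Submodule.ker_liftQ_eq_bot]; exact le_rfl)
    (Submodule.liftQ I (mulRightLin c) hker)
  refine ⟨φ, ?_⟩
  have h2 := LinearMap.congr_fun hφ (Submodule.Quotient.mk 1)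
  simp only [LinearMap.comp_apply, Submodule.liftQ_apply, LinearMap.toSpanSingleton_apply, one_smul] at h2
  have h3 : φ z = c := by simpa [mulRightLin] using h2
  rw [h3]; exact hc0

lemma baer_finsupp [IsQuasiFrobenius R] (ι : Type) : Module.Baer R (ι →₀ R) := by
  classical
  haveI : IsNoetherianRing R := IsQuasiFrobenius.noetherian_left
  intro I g
  obtain ⟨S, hS⟩ : I.FG := IsNoetherian.noetherian I
  -- support bound
  set T : Finset ι := S.attach.biUnion
    (fun a => (g ⟨a.1, hS ▸ Ideal.subset_span a.2⟩).support) with hT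
  have hsupp : ∀ y : I, (g y).support ⊆ T := by
    intro y
    have : ∀ x ∈ Ideal.span (S : Set R), ∀ hx : x ∈ I, (g ⟨x, hx⟩).support ⊆ T := by
      intro x hxs
      refine Submodule.span_induction ?_ ?_ ?_ ?_ hxs
      · intro x hxS hx
        have : g ⟨x, hx⟩ = g ⟨x, hS ▸ Ideal.subset_span hxS⟩ := rfl
        rw [this, hT]
        intro t ht
        exact Finset.mem_biUnion.mpr ⟨⟨x, hxS⟩, S.mem_attach _, ht⟩
      · intro hx
        have : (⟨0, hx⟩ : I) = 0 := rfl
        rw [this, map_zero]; simp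
      · intro x y hxs hys hx hy hxy
        have hxI : x ∈ I := hS ▸ hxs
        have hyI : y ∈ I := hS ▸ hys
        have : (⟨x + y, hxy⟩ : I) = ⟨x, hxI⟩ + ⟨y, hyI⟩ := rfl
        rw [this, map_add]
        exact (Finsupp.support_add).trans (Finset.union_subset (hx _) (hy _))
      · intro r x hxs hx hrx
        have hxI : x ∈ I := hS ▸ hxs
        have : (⟨r • x, hrx⟩ : I) = r • ⟨x, hxI⟩ := rfl
        rw [this, map_smul]
        exact (Finsupp.support_smul).trans (hx _)
    exact this y.1 (hS ▸ y.2) y.2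
  -- coordinates extend
  have hcoord : ∀ t : ι, ∃ e : R →ₗ[R] R, ∀ y : I, e y.1 = g y t := by
    intro t
    obtain ⟨e, he⟩ := IsQuasiFrobenius.selfInjective_left.out I.subtype
      (Submodule.injective_subtype I) ((Finsupp.lapply t) ∘ₗ g)
    exact ⟨e, fun y => he y⟩
  choose e he using hcoord
  refine ⟨∑ t ∈ T, (Finsupp.lsingle t) ∘ₗ (e t), fun x hx => ?_⟩
  have : (∑ t ∈ T, (Finsupp.lsingle t : R →ₗ[R] ι →₀ R) ∘ₗ (e t)) x
      = ∑ t ∈ T, Finsupp.single t (g ⟨x, hx⟩ t) := by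
    rw [LinearMap.sum_apply]
    exact Finset.sum_congr rfl fun t _ => by simp [he t ⟨x, hx⟩]
  rw [this]
  -- reassemble
  ext a
  rw [Finset.sum_apply']
  simp only [Finsupp.single_apply]
  rw [Finset.sum_ite_eq' T a]
  split_ifs with ha
  · rfl
  · exact ((Finsupp.notMem_support_iff).mp (fun hmem => ha (hsupp ⟨x, hx⟩ hmem))).symm

lemma injective_of_projective [IsQuasiFrobenius R] (P : Type) [AddCommGroup P] [Module R P]
    [hP : Module.Projective R P] : Module.Injective R P := by
  obtain ⟨s, hs⟩ := Module.projective_def.mp hP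
  haveI : Module.Injective R (P →₀ R) := Module.Baer.injective (baer_finsupp P)
  constructor
  intro X Y _ _ _ _ f hf gmap
  obtain ⟨h, hh⟩ := Module.Injective.out f hf (s ∘ₗ gmap)
  exact ⟨(Finsupp.linearCombination R id) ∘ₗ h, fun x => by
    simp only [LinearMap.comp_apply] at *
    rw [hh x, hs (gmap x)]⟩

lemma section_and_injective_ker [IsQuasiFrobenius R] {A B : Type} [AddCommGroup A] [Module R A]
    [AddCommGroup B] [Module R B] (p : A →ₗ[R] B) (hsurj : Function.Surjective p)
    (hst : IsStableEquiv R p) :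
    ∃ s : B →ₗ[R] A, p ∘ₗ s = LinearMap.id ∧ Module.Injective R ↥(LinearMap.ker p) := by
  obtain ⟨g, ⟨P1, _, _, hP1, a1, b1, hf1⟩, ⟨P2, _, _, hP2, a2, b2, hf2⟩⟩ := hst
  obtain ⟨b2', hb2'⟩ := Module.projective_lifting_property p b2 hsurj
  refine ⟨g - b2' ∘ₗ a2, ?_, ?_⟩
  · have : p ∘ₗ (g - b2' ∘ₗ a2) = p ∘ₗ g - (p ∘ₗ b2') ∘ₗ a2 := by
      ext x; simp
    rw [this, hb2', hf2]
    ext x; simp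
  · set s := g - b2' ∘ₗ a2 with hsdef
    have hps : ∀ x, p (s x) = x := by
      intro x
      have h1 : p (b2' (a2 x)) = b2 (a2 x) := by
        rw [← LinearMap.comp_apply, hb2']
      have h2 : b2 (a2 x) = p (g x) - x := by
        rw [← LinearMap.comp_apply, hf2]; simp
      simp [hsdef, h1, h2]
    set K := LinearMap.ker p with hK
    set r : A →ₗ[R] ↥K := LinearMap.codRestrict K (LinearMap.id - s ∘ₗ p)
      (fun x => by simp [hK, hps]) with hr
    -- id_K factors through P1
    have hsplit : (-(r ∘ₗ b1)) ∘ₗ (a1 ∘ₗ K.subtype) = LinearMap.id := by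
      ext x
      have h3 : b1 (a1 (x : A)) = g (p (x : A)) - (x : A) := by
        rw [← LinearMap.comp_apply, hf1]; simp
      have h4 : p (x : A) = 0 := x.2
      have h5 : b1 (a1 (x : A)) = -(x : A) := by rw [h3, h4]; simp
      have h6 : ∀ y : A, ((r y : A)) = y - s (p y) := fun y => rfl
      simp only [LinearMap.comp_apply, LinearMap.neg_apply, LinearMap.id_apply,
        Submodule.coe_subtype, h5, map_neg, neg_neg]
      rw [h6]
      simp [h4]
    haveI : Module.Projective R P1 := hP1
    haveI hKproj : Module.Projective R ↥K :=
      Module.Projective.of_split (a1 ∘ₗ K.subtype) (-(r ∘ₗ b1)) hsplit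
    exact injective_of_projective ↥K

lemma fst_surj_stable {A : Type} [AddCommGroup A] [Module R A] :
    Function.Surjective (LinearMap.fst R A R) ∧ IsStableEquiv R (LinearMap.fst R A R) := by
  constructor
  · exact fun y => ⟨(y, 0), rfl⟩
  · refine ⟨LinearMap.inl R A R, ?_, ?_⟩
    · refine ⟨R, inferInstance, inferInstance, inferInstance,
        -(LinearMap.snd R A R), LinearMap.inr R A R, ?_⟩
      apply LinearMap.ext
      rintro ⟨x1, x2⟩
      simp [Prod.ext_iff]
    · refine ⟨R, inferInstance, inferInstance, inferInstance, 0, 0, ?_⟩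
      apply LinearMap.ext
      intro x
      simp

end Cogen

namespace QuivRep

variable {R : Type} [Ring R] {V : Type} [Quiver.{1} V]

/-- Build a morphism of representations from vertex maps commuting with arrows. -/
def mkHom {A B : QuivRep R V} (f : ∀ j : Paths V, A.obj j ⟶ B.obj j)
    (nat : ∀ {i k : V} (a : i ⟶ k),
      A.map (Quiver.Hom.toPath a) ≫ f k = f i ≫ B.map (Quiver.Hom.toPath a)) : A ⟶ B where
  app := f
  naturality {X Y} ρ := by
    change @Quiver.Path V _ X Y at ρ
    induction ρ with
    | nil =>
      change A.map (Quiver.Path.nil : X ⟶ X) ≫ f X = f X ≫ B.map (Quiver.Path.nil : X ⟶ X)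
      rw [show (Quiver.Path.nil : X ⟶ X) = 𝟙 X from rfl, A.map_id, B.map_id,
        Category.id_comp, Category.comp_id]
    | @cons b c ρ' a ih =>
      have e1 : A.map (Quiver.Path.cons ρ' a) = A.map ρ' ≫ A.map (Quiver.Hom.toPath a) :=
        A.map_comp (f := ρ') (g := Quiver.Hom.toPath a)
      have e2 : B.map (Quiver.Path.cons ρ' a) = B.map ρ' ≫ B.map (Quiver.Hom.toPath a) :=
        B.map_comp (f := ρ') (g := Quiver.Hom.toPath a)
      change A.map (Quiver.Path.cons ρ' a) ≫ f c = f X ≫ B.map (Quiver.Path.cons ρ' a)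
      rw [e1, e2, Category.assoc, nat a, ← Category.assoc, ih, Category.assoc]

@[simp] lemma mkHom_app {A B : QuivRep R V} (f : ∀ j : Paths V, A.obj j ⟶ B.obj j)
    (nat : ∀ {i k : V} (a : i ⟶ k),
      A.map (Quiver.Hom.toPath a) ≫ f k = f i ≫ B.map (Quiver.Hom.toPath a)) (j : Paths V) :
    (mkHom f nat).app j = f j := rfl

lemma hom_comp_app {A B C : QuivRep R V} (f : A ⟶ B) (g : B ⟶ C) (j : V) :
    app (f ≫ g) j = (app g j) ∘ₗ (app f j) := rfl

lemma naturality_arrow {A B : QuivRep R V} (f : A ⟶ B) {i k : V} (a : i ⟶ k) :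
    (app f k) ∘ₗ ((A.arrowMap a).hom : ↥(A.vtx i) →ₗ[R] ↥(A.vtx k))
      = ((B.arrowMap a).hom : ↥(B.vtx i) →ₗ[R] ↥(B.vtx k)) ∘ₗ (app f i) :=
  congrArg ModuleCat.Hom.hom (f.naturality ((Paths.of V).map a))

end QuivRep

/-- Over a quasi-Frobenius ring and a finite acyclic quiver, a representation `M` is monic if
and only if it has the left lifting property against all morphisms that are pointwise
surjective stable equivalences. -/
theorem isMonic_iff_liftingProperty
    (R : Type) [Ring R] [IsQuasiFrobenius R]
    {V : Type} [Quiver.{1} V] (hV : IsFiniteAcyclic V)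
    (M : QuivRep R V) :
    M.IsMonic ↔
      ∀ (X Y : QuivRep R V) (p : X ⟶ Y),
        (∀ j : V, Function.Surjective (QuivRep.app p j) ∧ IsStableEquiv R (QuivRep.app p j)) →
        ∀ q : M ⟶ Y, ∃ h : M ⟶ X, h ≫ p = q := by
  classical
  constructor
  · -- monic implies lifting
    intro hM X Y p hp q
    -- topological well-foundedness of the arrow relation
    haveI : Finite V := let ⟨ft⟩ := hV.1; @Finite.of_fintype V ft
    set r : V → V → Prop := fun i k => Nonempty (i ⟶ k) with hrdef
    have pathlen : ∀ {i k : V}, Relation.TransGen r i k →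
        ∃ ρ : Quiver.Path i k, 0 < ρ.length := by
      intro i k hik
      induction hik with
      | single h => obtain ⟨a⟩ := h; exact ⟨a.toPath, by simp [Quiver.Hom.toPath]⟩
      | tail h1 h2 ih =>
        obtain ⟨ρ, hρ⟩ := ih; obtain ⟨a⟩ := h2
        exact ⟨ρ.cons a, by simp⟩
    have hwf : WellFounded r := by
      haveI : IsTrans V (Relation.TransGen r) := ⟨fun _ _ _ => Relation.TransGen.trans⟩
      haveI : IsIrrefl V (Relation.TransGen r) := ⟨by
        intro i hi
        obtain ⟨ρ, hρ⟩ := pathlen hi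
        have := hV.2.2 i ρ
        omega⟩
      exact Subrelation.wf (fun {x y} h => Relation.TransGen.single h)
        (Finite.wellFounded_of_trans_of_irrefl _)
    -- sections and injective kernels at each vertex
    have hsec : ∀ k : V, ∃ s : ↥(Y.vtx k) →ₗ[R] ↥(X.vtx k),
        (QuivRep.app p k) ∘ₗ s = LinearMap.id ∧
        Module.Injective R ↥(LinearMap.ker (QuivRep.app p k)) :=
      fun k => section_and_injective_ker _ (hp k).1 (hp k).2
    choose sec hsec1 hsec2 using hsec
    -- the inductive step at a vertex
    have key : ∀ (k : V)
        (prev : ∀ a : Σ i : V, i ⟶ k,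
          {h : ↥(M.vtx a.1) →ₗ[R] ↥(X.vtx a.1) //
            (QuivRep.app p a.1) ∘ₗ h = QuivRep.app q a.1}),
        ∃ hk : {h : ↥(M.vtx k) →ₗ[R] ↥(X.vtx k) //
            (QuivRep.app p k) ∘ₗ h = QuivRep.app q k},
          ∀ a : Σ i : V, i ⟶ k,
            hk.1 ∘ₗ ((M.arrowMap a.2).hom : ↥(M.vtx a.1) →ₗ[R] ↥(M.vtx k))
              = ((X.arrowMap a.2).hom : ↥(X.vtx a.1) →ₗ[R] ↥(X.vtx k)) ∘ₗ (prev a).1 := by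
      intro k prev
      letI : DecidableEq (Σ i : V, i ⟶ k) := Classical.decEq _
      set μ : (DirectSum (Σ i : V, i ⟶ k) (fun a => ↥(M.vtx a.1))) →ₗ[R] ↥(M.vtx k) :=
        DirectSum.toModule R (Σ i : V, i ⟶ k) (M.vtx k)
          (fun a => ((M.arrowMap a.2).hom : ↥(M.vtx a.1) →ₗ[R] ↥(M.vtx k))) with hμdef
      have hμ : Function.Injective μ := hM k
      set ψ : (DirectSum (Σ i : V, i ⟶ k) (fun a => ↥(M.vtx a.1))) →ₗ[R] ↥(X.vtx k) :=
        DirectSum.toModule R (Σ i : V, i ⟶ k) (X.vtx k)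
          (fun a => ((X.arrowMap a.2).hom : ↥(X.vtx a.1) →ₗ[R] ↥(X.vtx k)) ∘ₗ (prev a).1) with hψdef
      have hpψ : (QuivRep.app p k) ∘ₗ ψ = (QuivRep.app q k) ∘ₗ μ := by
        refine DirectSum.linearMap_ext R fun a => ?_
        ext m
        simp only [LinearMap.comp_apply, hψdef, hμdef, DirectSum.toModule_lof]
        have h1 := LinearMap.congr_fun (QuivRep.naturality_arrow p a.2) ((prev a).1 m)
        simp only [LinearMap.comp_apply] at h1
        rw [h1]
        have h2 := LinearMap.congr_fun (prev a).2 m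
        simp only [LinearMap.comp_apply] at h2
        rw [h2]
        have h3 := LinearMap.congr_fun (QuivRep.naturality_arrow q a.2) m
        simp only [LinearMap.comp_apply] at h3
        rw [← h3]
      set δ : (DirectSum (Σ i : V, i ⟶ k) (fun a => ↥(M.vtx a.1))) →ₗ[R] ↥(X.vtx k) :=
        ψ - (sec k) ∘ₗ (QuivRep.app q k) ∘ₗ μ with hδdef
      have hδmem : ∀ d, δ d ∈ LinearMap.ker (QuivRep.app p k) := by
        intro d
        rw [LinearMap.mem_ker, hδdef]
        have h4 := LinearMap.congr_fun hpψ d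
        simp only [LinearMap.comp_apply] at h4
        have h5 := LinearMap.congr_fun (hsec1 k) ((QuivRep.app q k) (μ d))
        simp only [LinearMap.comp_apply, LinearMap.id_apply] at h5
        simp only [LinearMap.sub_apply, LinearMap.comp_apply, map_sub, h4, h5]
        exact sub_self _
      obtain ⟨kk, hkk⟩ := Module.Injective.extension_property R _ _ _ (inj := hsec2 k) μ hμ
        (LinearMap.codRestrict (LinearMap.ker (QuivRep.app p k)) δ hδmem)
      refine ⟨⟨(sec k) ∘ₗ (QuivRep.app q k)
          + (LinearMap.ker (QuivRep.app p k)).subtype ∘ₗ kk, ?_⟩, ?_⟩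
      · ext x
        have h5 := LinearMap.congr_fun (hsec1 k) ((QuivRep.app q k) x)
        simp only [LinearMap.comp_apply, LinearMap.id_apply] at h5
        have h6 : (QuivRep.app p k) ((kk x : ↥(X.vtx k))) = 0 := (kk x).2
        simp only [LinearMap.comp_apply, LinearMap.add_apply, map_add, Submodule.coe_subtype,
          h5, h6, add_zero]
      · intro a
        ext m
        have h7 : ((M.arrowMap a.2).hom : ↥(M.vtx a.1) →ₗ[R] ↥(M.vtx k)) m = μ (DirectSum.lof R _ _ a m) := by
          rw [hμdef, DirectSum.toModule_lof]
        simp only [LinearMap.comp_apply, LinearMap.add_apply, Submodule.coe_subtype]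
        rw [h7]
        have h8 := congrArg Subtype.val (LinearMap.congr_fun hkk (DirectSum.lof R _ _ a m))
        simp only [LinearMap.comp_apply, LinearMap.codRestrict_apply] at h8
        rw [h8, hδdef]
        simp only [LinearMap.sub_apply, LinearMap.comp_apply]
        rw [add_sub_cancel]
        rw [hψdef, DirectSum.toModule_lof]
        rfl
    -- well-founded recursion
    set C : V → Type := fun k => {h : ↥(M.vtx k) →ₗ[R] ↥(X.vtx k) //
      (QuivRep.app p k) ∘ₗ h = QuivRep.app q k} with hCdef
    set F : ∀ k : V, (∀ i : V, r i k → C i) → C k :=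
      fun k ih => (key k (fun a => ih a.1 ⟨a.2⟩)).choose with hFdef
    have hHc : ∀ (k : V) (a : (Σ i : V, i ⟶ k)),
        (hwf.fix F k).1 ∘ₗ ((M.arrowMap a.2).hom : ↥(M.vtx a.1) →ₗ[R] ↥(M.vtx k))
          = ((X.arrowMap a.2).hom : ↥(X.vtx a.1) →ₗ[R] ↥(X.vtx k)) ∘ₗ (hwf.fix F a.1).1 := by
      intro k a
      rw [WellFounded.fix_eq hwf F k]
      exact (key k (fun a' => hwf.fix F a'.1)).choose_spec a
    refine ⟨QuivRep.mkHom (fun k => (ModuleCat.ofHom (hwf.fix F k).1 :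
        M.obj k ⟶ X.obj k)) (fun {i k} a => ?_), ?_⟩
    · exact ModuleCat.hom_ext (hHc k ⟨i, a⟩)
    · refine NatTrans.ext (funext fun k => ?_)
      exact ModuleCat.hom_ext (hwf.fix F k).2
  · -- lifting implies monic
    intro hlift j
    letI : DecidableEq (Σ i : V, i ⟶ j) := Classical.decEq _
    show Function.Injective
      (DirectSum.toModule R (Σ i : V, i ⟶ j) (M.vtx j)
        (fun a => ((M.arrowMap a.2).hom : ↥(M.vtx a.1) →ₗ[R] ↥(M.vtx j))))
    set μ : (DirectSum (Σ i : V, i ⟶ j) (fun a => ↥(M.vtx a.1))) →ₗ[R] ↥(M.vtx j) :=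
      DirectSum.toModule R (Σ i : V, i ⟶ j) (M.vtx j)
        (fun a => ((M.arrowMap a.2).hom : ↥(M.vtx a.1) →ₗ[R] ↥(M.vtx j))) with hμdef
    rw [injective_iff_map_eq_zero]
    intro z hz
    by_contra hz0
    obtain ⟨φ, hφ⟩ := exists_linearMap_toRing_ne_zero (R := R) z hz0
    -- the test fibration
    obtain ⟨cφ, hcφ⟩ : ∃ c : ∀ (i k : V), (i ⟶ k) → (↥(M.vtx i) →ₗ[R] R),
        ∀ (i : V) (a : i ⟶ j), c i j a = φ ∘ₗ (DirectSum.lof R (Σ i' : V, i' ⟶ j)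
          (fun a' => ↥(M.vtx a'.1)) ⟨i, a⟩) :=
      ⟨fun i k a => if h : k = j then φ ∘ₗ (DirectSum.lof R (Σ i' : V, i' ⟶ j)
          (fun a' => ↥(M.vtx a'.1)) ⟨i, h ▸ a⟩) else 0,
        fun i a => by simp⟩
    set Xf : V ⥤q ModuleCat.{0} R :=
      { obj := fun k => ModuleCat.of R (↥(M.vtx k) × R)
        map := fun {i k} a =>
          (ModuleCat.ofHom ((((M.arrowMap a).hom : ↥(M.vtx i) →ₗ[R] ↥(M.vtx k)) ∘ₗ
              LinearMap.fst R ↥(M.vtx i) R).prod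
            ((cφ i k a) ∘ₗ LinearMap.fst R ↥(M.vtx i) R)) :
              ModuleCat.of R (↥(M.vtx i) × R) ⟶ ModuleCat.of R (↥(M.vtx k) × R)) } with hXfdef
    set X : QuivRep R V := Paths.lift Xf with hXdef
    have hXmap : ∀ {i k : V} (a : i ⟶ k), X.map (Quiver.Hom.toPath a) = Xf.map a :=
      fun {i k} a => Paths.lift_toPath Xf a
    set pmor : X ⟶ M := QuivRep.mkHom
      (fun k => (ModuleCat.ofHom (LinearMap.fst R ↥(M.vtx k) R : (↥(M.vtx k) × R) →ₗ[R] ↥(M.vtx k)) :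
        X.obj k ⟶ M.obj k))
      (fun {i k} a => by
        rw [hXmap a]
        ext x
        rfl) with hpdef
    have hcond : ∀ k : V, Function.Surjective (QuivRep.app pmor k) ∧
        IsStableEquiv R (QuivRep.app pmor k) := by
      intro k
      exact fst_surj_stable (A := ↥(M.vtx k))
    obtain ⟨h, hh⟩ := hlift X M pmor hcond (𝟙 M)
    have hfst : ∀ (k : V) (x : ↥(M.vtx k)),
        ((QuivRep.app h k x : ↥(M.vtx k) × R)).1 = x := by
      intro k x
      have h1 : QuivRep.app (h ≫ pmor) k = QuivRep.app (𝟙 M) k :=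
        congrArg (fun t => QuivRep.app t k) hh
      exact LinearMap.congr_fun h1 x
    set u : ↥(M.vtx j) →ₗ[R] R :=
      (LinearMap.snd R ↥(M.vtx j) R) ∘ₗ
        (QuivRep.app h j : ↥(M.vtx j) →ₗ[R] (↥(M.vtx j) × R)) with hudef
    have harrow : ∀ a : (Σ i : V, i ⟶ j),
        u ∘ₗ ((M.arrowMap a.2).hom : ↥(M.vtx a.1) →ₗ[R] ↥(M.vtx j))
          = φ ∘ₗ (DirectSum.lof R (Σ i' : V, i' ⟶ j) (fun a' => ↥(M.vtx a'.1)) a) := by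
      intro a
      apply LinearMap.ext
      intro m
      simp only [LinearMap.comp_apply]
      have h2 := LinearMap.congr_fun (QuivRep.naturality_arrow h a.2) m
      simp only [LinearMap.comp_apply] at h2
      refine Eq.trans (congrArg (LinearMap.snd R ↥(M.vtx j) R) h2) ?_
      refine Eq.trans (congrArg (LinearMap.snd R ↥(M.vtx j) R)
        (LinearMap.congr_fun (congrArg ModuleCat.Hom.hom (hXmap a.2)) ((QuivRep.app h a.1) m))) ?_
      show cφ a.1 j a.2 (((QuivRep.app h a.1) m).1) = _
      rw [hfst a.1 m, hcφ a.1 a.2]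
      rfl
    have hφμ : φ = u ∘ₗ μ := by
      refine DirectSum.linearMap_ext R fun a => ?_
      rw [LinearMap.comp_assoc]
      have : μ ∘ₗ (DirectSum.lof R (Σ i' : V, i' ⟶ j) (fun a' => ↥(M.vtx a'.1)) a)
          = ((M.arrowMap a.2).hom : ↥(M.vtx a.1) →ₗ[R] ↥(M.vtx j)) := by
        ext m
        simp only [LinearMap.comp_apply, hμdef, DirectSum.toModule_lof]
      rw [this, harrow a]
    apply hφ
    rw [hφμ]
    simp only [LinearMap.comp_apply, hz, map_zero]
end
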